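/- arXiv:1812.11041 — 10 statements merged into one kernel-verified Lean document; each statement's English description precedes it below -/
import Mathlib

section
/- Let a, b : ℕ → ℝ with a 0 = 1 and a n > 0 for n ≥ 1. There exists a family of real numbers w_{n,s} (n ≥ 1, s ≥ n), depending only on a and b and not on the control, such that for every control f : ℕ → ℝ and all integers 1 ≤ n ≤ t, the solution of the semi-infinite discrete-time dynamical system admits the representation u^f_{n,t} = (∏_{k=0}^{n−1} a_k) · f_{t−n} + ∑_{s=n}^{t−1} w_{n,s} f_{t−s−1}; moreover w satisfies the diagonal relation w_{n,n} = b_n ∏_{k=0}^{n−1} a_k + a_{n−1} w_{n−1,n−1} for n ≥ 1 (with w_{0,s} := 0 for all s). -/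
/-- `u` is the solution of the semi-infinite discrete-time dynamical system with
coefficients `a`, `b` and boundary control `f`. -/
def IsSolU (a b f : ℕ → ℝ) (u : ℕ → ℕ → ℝ) : Prop :=
  (∀ n, 1 ≤ n → u n 0 = 0) ∧
  (∀ t, u 0 t = f t) ∧
  (∀ n t, 1 ≤ n →
    u n (t + 1) + u n (t - 1) - a n * u (n + 1) t - a (n - 1) * u (n - 1) t
      - b n * u n t = 0)

noncomputable def upair (a b f : ℕ → ℝ) : ℕ → ((ℕ → ℝ) × (ℕ → ℝ))
  | 0 => (fun n => if n = 0 then f 0 else 0, fun n => if n = 0 then f 0 else 0)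
  | (t+1) =>
    ((upair a b f t).2,
     fun n => if n = 0 then f (t+1) else
       a n * (upair a b f t).2 (n+1) + a (n-1) * (upair a b f t).2 (n-1)
         + b n * (upair a b f t).2 n - (upair a b f t).1 n)

noncomputable def usol (a b f : ℕ → ℝ) (n t : ℕ) : ℝ := (upair a b f t).2 n

lemma usol_zero (a b f : ℕ → ℝ) (n : ℕ) (hn : n ≠ 0) : usol a b f n 0 = 0 := by
  simp [usol, upair, hn]

lemma usol_boundary (a b f : ℕ → ℝ) (t : ℕ) : usol a b f 0 t = f t := by
  cases t <;> simp [usol, upair]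

lemma upair_fst (a b f : ℕ → ℝ) (t n : ℕ) : (upair a b f t).1 n = usol a b f n (t-1) := by
  cases t <;> rfl

lemma usol_step (a b f : ℕ → ℝ) (n t : ℕ) (hn : n ≠ 0) :
    usol a b f n (t+1) = a n * usol a b f (n+1) t + a (n-1) * usol a b f (n-1) t
      + b n * usol a b f n t - usol a b f n (t-1) := by
  have : usol a b f n (t+1)
      = a n * (upair a b f t).2 (n+1) + a (n-1) * (upair a b f t).2 (n-1)
        + b n * (upair a b f t).2 n - (upair a b f t).1 n := by
    simp [usol, upair, hn]
  rw [this, upair_fst]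
  rfl

lemma usol_isSol (a b f : ℕ → ℝ) : IsSolU a b f (usol a b f) := by
  refine ⟨fun n hn => usol_zero a b f n (by omega), usol_boundary a b f, fun n t hn => ?_⟩
  rw [usol_step a b f n t (by omega)]
  ring

lemma usol_unique (a b f : ℕ → ℝ) (u : ℕ → ℕ → ℝ) (hu : IsSolU a b f u) :
    ∀ t n, u n t = usol a b f n t := by
  intro t
  induction t using Nat.strong_induction_on with
  | _ t ih =>
    match t with
    | 0 =>
      intro n
      rcases Nat.eq_zero_or_pos n with h | h
      · subst h; rw [hu.2.1, usol_boundary]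
      · rw [hu.1 n h, usol_zero a b f n (by omega)]
    | (t+1) =>
      intro n
      rcases Nat.eq_zero_or_pos n with h | h
      · subst h; rw [hu.2.1, usol_boundary]
      · have e := hu.2.2 n t h
        have h1 := ih t (by omega) (n+1)
        have h2 := ih t (by omega) (n-1)
        have h3 := ih t (by omega) n
        have h4 := ih (t-1) (by omega) n
        rw [usol_step a b f n t (by omega), ← h1, ← h2, ← h3, ← h4]
        linarith

noncomputable def gker (a b : ℕ → ℝ) : ℕ → ℕ → ℝ :=
  usol a b (fun s => if s = 0 then (1:ℝ) else 0)

lemma gker_boundary (a b : ℕ → ℝ) (t : ℕ) :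
    gker a b 0 t = if t = 0 then (1:ℝ) else 0 := usol_boundary _ _ _ _

lemma gker_speed (a b : ℕ → ℝ) :
    ∀ t n, 1 ≤ n → (t < n → gker a b n t = 0) ∧
      (t = n → gker a b n t = ∏ k ∈ Finset.range n, a k) := by
  intro t
  induction t using Nat.strong_induction_on with
  | _ t ih =>
    match t with
    | 0 =>
      intro n hn
      exact ⟨fun _ => usol_zero a b _ n (by omega), fun h => by omega⟩
    | (t+1) =>
      intro n hn
      have step : gker a b n (t+1) = a n * gker a b (n+1) t + a (n-1) * gker a b (n-1) t
          + b n * gker a b n t - gker a b n (t-1) :=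
        usol_step a b (fun s => if s = 0 then (1:ℝ) else 0) n t (by omega)
      constructor
      · intro hlt
        have h1 : gker a b (n+1) t = 0 := (ih t (by omega) (n+1) (by omega)).1 (by omega)
        have h2 : gker a b (n-1) t = 0 := (ih t (by omega) (n-1) (by omega)).1 (by omega)
        have h3 : gker a b n t = 0 := (ih t (by omega) n hn).1 (by omega)
        have h4 : gker a b n (t-1) = 0 := (ih (t-1) (by omega) n hn).1 (by omega)
        rw [step, h1, h2, h3, h4]
        ring
      · intro he
        have h1 : gker a b (n+1) t = 0 := (ih t (by omega) (n+1) (by omega)).1 (by omega)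
        have h3 : gker a b n t = 0 := (ih t (by omega) n hn).1 (by omega)
        have h4 : gker a b n (t-1) = 0 := (ih (t-1) (by omega) n hn).1 (by omega)
        have h2 : gker a b (n-1) t = ∏ k ∈ Finset.range (n-1), a k := by
          by_cases hn1 : n = 1
          · subst hn1
            have ht0 : t = 0 := by omega
            subst ht0
            simp [gker, usol, upair]
          · exact (ih t (by omega) (n-1) (by omega)).2 (by omega)
        rw [step, h1, h2, h3, h4]
        have hp : ∏ k ∈ Finset.range n, a k = a (n-1) * ∏ k ∈ Finset.range (n-1), a k := by
          conv_lhs => rw [show n = (n-1)+1 by omega]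
          rw [Finset.prod_range_succ]; ring
        rw [hp]; ring

lemma V_isSol (a b f : ℕ → ℝ) :
    IsSolU a b f (fun n t => if n = 0 then f t
      else ∑ τ ∈ Finset.range t, gker a b n (t - τ) * f τ) := by
  have gstep : ∀ n s, n ≠ 0 → gker a b n (s+1) = a n * gker a b (n+1) s
      + a (n-1) * gker a b (n-1) s + b n * gker a b n s - gker a b n (s-1) :=
    fun n s hn => usol_step a b _ n s hn
  refine ⟨fun n hn => by
    simp only [if_neg (show n ≠ 0 by omega), Finset.range_zero, Finset.sum_empty],
    fun t => by simp, fun n t hn => ?_⟩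
  have hn0 : n ≠ 0 := by omega
  simp only [if_neg hn0, if_neg (Nat.succ_ne_zero n)]
  cases t with
  | zero =>
    simp only [zero_add, Nat.zero_sub, Finset.range_zero, Finset.sum_empty,
      Finset.sum_range_one, Nat.sub_zero, mul_zero, sub_zero]
    by_cases hn1 : n - 1 = 0
    · have hn1' : n = 1 := by omega
      subst hn1'
      rw [if_pos rfl]
      have hg11 : gker a b 1 1 = a 0 := by
        rw [(gker_speed a b 1 1 le_rfl).2 rfl, Finset.prod_range_one]
      rw [hg11, show (1:ℕ)-1 = 0 from rfl]; ring
    · rw [if_neg hn1, (gker_speed a b 1 n hn).1 (by omega)]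
      simp
  | succ r =>
    have e1 : ∑ τ ∈ Finset.range (r+1+1), gker a b n (r+1+1-τ) * f τ
        = (∑ τ ∈ Finset.range (r+1), gker a b n (r+2-τ) * f τ) + gker a b n 1 * f (r+1) := by
      rw [Finset.sum_range_succ, show r+1+1-(r+1) = 1 from by omega]
    have e2 : ∑ τ ∈ Finset.range (r+1-1), gker a b n (r+1-1-τ) * f τ
        = ∑ τ ∈ Finset.range (r+1), gker a b n (r-τ) * f τ := by
      rw [show r+1-1 = r from rfl, Finset.sum_range_succ, Nat.sub_self,
        (gker_speed a b 0 n hn).1 (by omega)]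
      ring
    have key : ∑ τ ∈ Finset.range (r+1), gker a b n (r+2-τ) * f τ
        = a n * (∑ τ ∈ Finset.range (r+1), gker a b (n+1) (r+1-τ) * f τ)
        + a (n-1) * (∑ τ ∈ Finset.range (r+1), gker a b (n-1) (r+1-τ) * f τ)
        + b n * (∑ τ ∈ Finset.range (r+1), gker a b n (r+1-τ) * f τ)
        - ∑ τ ∈ Finset.range (r+1), gker a b n (r-τ) * f τ := by
      rw [Finset.mul_sum, Finset.mul_sum, Finset.mul_sum, ← Finset.sum_add_distrib,
        ← Finset.sum_add_distrib, ← Finset.sum_sub_distrib]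
      refine Finset.sum_congr rfl fun τ hτ => ?_
      have hτr : τ ≤ r := by simpa [Nat.lt_succ_iff] using hτ
      rw [show r+2-τ = (r+1-τ)+1 from by omega, gstep n (r+1-τ) hn0,
        show r+1-τ-1 = r-τ from by omega]
      ring
    rw [e1, e2, key]
    by_cases hn1 : n - 1 = 0
    · have hn1' : n = 1 := by omega
      subst hn1'
      rw [if_pos rfl]
      have hz : ∑ τ ∈ Finset.range (r+1), gker a b (1-1) (r+1-τ) * f τ = 0 := by
        refine Finset.sum_eq_zero fun τ hτ => ?_
        have hτr : τ ≤ r := by simpa [Nat.lt_succ_iff] using hτ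
        rw [show (1:ℕ)-1 = 0 from rfl, gker_boundary, if_neg (by omega)]
        ring
      have hg11 : gker a b 1 1 = a 0 := by
        rw [(gker_speed a b 1 1 le_rfl).2 rfl, Finset.prod_range_one]
      rw [hz, hg11]
      ring
    · rw [if_neg hn1, (gker_speed a b 1 n hn).1 (by omega)]
      ring

/-- Representation of the solution of the semi-infinite system:
`u^f_{n,t} = (∏_{k=0}^{n-1} a_k) f_{t-n} + ∑_{s=n}^{t-1} w_{n,s} f_{t-s-1}`
for `1 ≤ n ≤ t`, with a kernel `w` independent of the control, satisfying
`w_{0,s} = 0` and the diagonal relation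
`w_{n,n} = b_n ∏_{k=0}^{n-1} a_k + a_{n-1} w_{n-1,n-1}`. -/
theorem solution_representation
    (a b : ℕ → ℝ) (ha0 : a 0 = 1) (hapos : ∀ n, 1 ≤ n → 0 < a n) :
    ∃ w : ℕ → ℕ → ℝ,
      (∀ s, w 0 s = 0) ∧
      (∀ n, 1 ≤ n →
        w n n = b n * (∏ k ∈ Finset.range n, a k) + a (n - 1) * w (n - 1) (n - 1)) ∧
      (∀ (f : ℕ → ℝ) (u : ℕ → ℕ → ℝ), IsSolU a b f u →
        ∀ n t : ℕ, 1 ≤ n → n ≤ t →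
          u n t = (∏ k ∈ Finset.range n, a k) * f (t - n)
            + ∑ s ∈ Finset.Icc n (t - 1), w n s * f (t - s - 1)) := by
  refine ⟨fun n s => gker a b n (s+1), fun s => ?_, fun n hn => ?_, fun f u hu n t hn hnt => ?_⟩
  · show gker a b 0 (s+1) = 0
    rw [gker_boundary]; simp
  · show gker a b n (n+1) = b n * (∏ k ∈ Finset.range n, a k)
      + a (n-1) * gker a b (n-1) ((n-1)+1)
    have step : gker a b n (n+1) = a n * gker a b (n+1) n + a (n-1) * gker a b (n-1) n
        + b n * gker a b n n - gker a b n (n-1) :=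
      usol_step a b _ n n (by omega)
    have h2 : gker a b (n-1) n = gker a b (n-1) (n-1+1) := by
      rw [show n-1+1 = n from by omega]
    rw [step, (gker_speed a b n (n+1) (by omega)).1 (by omega),
      (gker_speed a b (n-1) n hn).1 (by omega), (gker_speed a b n n hn).2 rfl, h2]
    ring
  · show u n t = (∏ k ∈ Finset.range n, a k) * f (t - n)
      + ∑ s ∈ Finset.Icc n (t - 1), gker a b n (s+1) * f (t - s - 1)
    have hone := usol_unique a b f u hu t n
    have htwo := usol_unique a b f _ (V_isSol a b f) t n
    rw [hone, ← htwo]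
    show (if n = 0 then f t else ∑ τ ∈ Finset.range t, gker a b n (t - τ) * f τ) = _
    rw [if_neg (show n ≠ 0 by omega),
      ← Finset.sum_range_reflect (fun τ => gker a b n (t - τ) * f τ) t]
    have hc : ∀ j ∈ Finset.range t,
        gker a b n (t - (t-1-j)) * f (t-1-j) = gker a b n (j+1) * f (t-1-j) := by
      intro j hj
      have hjt : j < t := Finset.mem_range.mp hj
      rw [show t - (t-1-j) = j+1 from by omega]
    rw [Finset.sum_congr rfl hc, Finset.range_eq_Ico,
      ← Finset.sum_Ico_consecutive _ (Nat.zero_le (n-1)) (show n-1 ≤ t by omega)]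
    have hz : ∑ j ∈ Finset.Ico 0 (n-1), gker a b n (j+1) * f (t-1-j) = 0 := by
      refine Finset.sum_eq_zero fun j hj => ?_
      have : j < n-1 := (Finset.mem_Ico.mp hj).2
      rw [(gker_speed a b (j+1) n hn).1 (by omega)]; ring
    rw [hz, zero_add, Finset.sum_eq_sum_Ico_succ_bot (show n-1 < t by omega),
      show n-1+1 = n from by omega, (gker_speed a b n n hn).2 rfl,
      show t-1-(n-1) = t-n from by omega]
    congr 1
    · rw [show Finset.Icc n (t-1) = Finset.Ico n t from by
        rw [← Finset.Ico_add_one_right_eq_Icc]; congr 1; omega]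
      exact Finset.sum_congr rfl fun s hs => by rw [show t-1-s = t-s-1 from by omega]
end

section
/- Let a, b : ℕ → ℝ with a 0 = 1 and a n > 0 for n ≥ 1. For every control f : ℕ → ℝ, all n ≥ 1 and all t ≥ 1, the solution of the semi-infinite discrete-time dynamical system satisfies the Duhamel-type representation u^f_{n,t} = ∑_{k=0}^{t−1} f_k · u^δ_{n,t−k}, where u^δ is the solution corresponding to the control δ = (1,0,0,…). -/
/-- The boundary control `δ = (1,0,0,…)`. -/
def deltaCtrl : ℕ → ℝ := fun t => if t = 0 then 1 else 0

/-- Uniqueness of solutions on `n ≥ 1`. -/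
lemma sol_unique (a b f : ℕ → ℝ) (u v : ℕ → ℕ → ℝ)
    (hu : IsSolU a b f u) (hv : IsSolU a b f v) :
    ∀ t n, u n t = v n t := by
  intro t
  induction t using Nat.strong_induction_on with
  | _ t ih =>
    intro n
    match n with
    | 0 => rw [hu.2.1, hv.2.1]
    | n + 1 =>
      match t with
      | 0 => rw [hu.1 _ (by omega), hv.1 _ (by omega)]
      | t + 1 =>
        have h1 := hu.2.2 (n + 1) t (by omega)
        have h2 := hv.2.2 (n + 1) t (by omega)
        simp only [Nat.add_sub_cancel] at h1 h2
        have e1 := ih t (by omega) (n + 2)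
        have e2 := ih t (by omega) (n + 1)
        have e3 := ih t (by omega) n
        have e4 := ih (t - 1) (by omega) (n + 1)
        rw [e1, e2, e3, e4] at h1
        linarith

/-- the candidate solution given by the Duhamel-type convolution -/
noncomputable def wSol (f : ℕ → ℝ) (uδ : ℕ → ℕ → ℝ) : ℕ → ℕ → ℝ :=
  fun n t => if n = 0 then f t else ∑ k ∈ Finset.range t, f k * uδ n (t - k)

lemma delta_u1 (a b : ℕ → ℝ) (ha0 : a 0 = 1) (uδ : ℕ → ℕ → ℝ)
    (huδ : IsSolU a b deltaCtrl uδ) (n : ℕ) (hn : 1 ≤ n) :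
    uδ n 1 = if n = 1 then 1 else 0 := by
  have hr := huδ.2.2 n 0 hn
  simp only [Nat.zero_sub, Nat.zero_add] at hr
  rw [huδ.1 n hn, huδ.1 (n + 1) (by omega)] at hr
  rcases eq_or_ne n 1 with rfl | hne
  · simp only [show (1 : ℕ) - 1 = 0 from rfl, huδ.2.1 0] at hr
    simp only [deltaCtrl, if_pos rfl] at hr
    simp only [if_pos rfl]
    rw [ha0] at hr
    linarith
  · rw [huδ.1 (n - 1) (by omega)] at hr
    simp only [if_neg hne]
    linarith

lemma wSol_isSol (a b f : ℕ → ℝ) (ha0 : a 0 = 1) (uδ : ℕ → ℕ → ℝ)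
    (huδ : IsSolU a b deltaCtrl uδ) : IsSolU a b f (wSol f uδ) := by
  refine ⟨?_, ?_, ?_⟩
  · intro n hn
    simp [wSol, Nat.one_le_iff_ne_zero.mp hn]
  · intro t
    simp [wSol]
  · intro n t hn
    have hn0 : n ≠ 0 := by omega
    -- the combined sum vanishes
    have hs : ∑ k ∈ Finset.range t, f k * uδ n ((t - k) + 1)
        + ∑ k ∈ Finset.range t, f k * uδ n ((t - k) - 1)
        - a n * ∑ k ∈ Finset.range t, f k * uδ (n + 1) (t - k)
        - a (n - 1) * ∑ k ∈ Finset.range t, f k * uδ (n - 1) (t - k)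
        - b n * ∑ k ∈ Finset.range t, f k * uδ n (t - k) = 0 := by
      rw [Finset.mul_sum, Finset.mul_sum, Finset.mul_sum, ← Finset.sum_add_distrib,
        ← Finset.sum_sub_distrib, ← Finset.sum_sub_distrib, ← Finset.sum_sub_distrib]
      apply Finset.sum_eq_zero
      intro k _
      have h := huδ.2.2 n (t - k) hn
      linear_combination f k * h
    have eq1 : wSol f uδ n (t + 1)
        = ∑ k ∈ Finset.range t, f k * uδ n ((t - k) + 1) + f t * uδ n 1 := by
      simp only [wSol, if_neg hn0]
      rw [Finset.sum_range_succ]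
      congr 1
      · apply Finset.sum_congr rfl
        intro k hk
        have hk' : k < t := Finset.mem_range.mp hk
        congr 2
        omega
      · congr 2
        omega
    have eq2 : wSol f uδ n (t - 1)
        = ∑ k ∈ Finset.range t, f k * uδ n ((t - k) - 1) := by
      simp only [wSol, if_neg hn0]
      match t with
      | 0 => simp
      | s + 1 =>
        simp only [Nat.add_sub_cancel]
        rw [Finset.sum_range_succ]
        have : uδ n (s + 1 - s - 1) = 0 := by
          have : s + 1 - s - 1 = 0 := by omega
          rw [this, huδ.1 n hn]
        rw [this, mul_zero, add_zero]
        apply Finset.sum_congr rfl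
        intro k hk
        have hk' : k < s := Finset.mem_range.mp hk
        congr 2
        omega
    have eq3 : wSol f uδ (n + 1) t = ∑ k ∈ Finset.range t, f k * uδ (n + 1) (t - k) := by
      simp [wSol]
    have eq4 : wSol f uδ (n - 1) t
        = ∑ k ∈ Finset.range t, f k * uδ (n - 1) (t - k)
          + (if n = 1 then f t else 0) := by
      rcases eq_or_ne n 1 with rfl | hne
      · simp only [wSol, show (1:ℕ) - 1 = 0 from rfl, if_pos rfl]
        have : ∑ k ∈ Finset.range t, f k * uδ 0 (t - k) = 0 := by
          apply Finset.sum_eq_zero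
          intro k hk
          have hk' : k < t := Finset.mem_range.mp hk
          rw [huδ.2.1]
          simp [deltaCtrl, show t - k ≠ 0 by omega]
        rw [this, zero_add]
      · simp only [wSol, if_neg (show n - 1 ≠ 0 by omega), if_neg hne, add_zero]
    have eq5 : wSol f uδ n t = ∑ k ∈ Finset.range t, f k * uδ n (t - k) := by
      simp only [wSol, if_neg hn0]
    have hδ1 := delta_u1 a b ha0 uδ huδ n hn
    rw [eq1, eq2, eq3, eq4, eq5, hδ1]
    rcases eq_or_ne n 1 with rfl | hne
    · norm_num [ha0] at hs ⊢
      linarith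
    · simp only [if_neg hne]
      linarith

/-- Duhamel-type representation for the semi-infinite system:
`u^f_{n,t} = ∑_{k=0}^{t-1} f_k u^δ_{n,t-k}`. -/
theorem duhamel_semiinfinite
    (a b : ℕ → ℝ) (ha0 : a 0 = 1) (hapos : ∀ n, 1 ≤ n → 0 < a n)
    (f : ℕ → ℝ) (u uδ : ℕ → ℕ → ℝ)
    (hu : IsSolU a b f u) (huδ : IsSolU a b deltaCtrl uδ) :
    ∀ n t : ℕ, 1 ≤ n → 1 ≤ t →
      u n t = ∑ k ∈ Finset.range t, f k * uδ n (t - k) := by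
  intro n t hn ht
  have hw := wSol_isSol a b f ha0 uδ huδ
  have := sol_unique a b f u (wSol f uδ) hu hw t n
  rw [this]
  simp [wSol, Nat.one_le_iff_ne_zero.mp hn]
end

section
/- Let a, b : ℕ → ℝ with a 0 = 1 and a n > 0 for n ≥ 1, and fix N ≥ 1. The response vectors of the semi-infinite and of the finite dynamical systems with the same coefficients a, b coincide up to time 2N−1: r_t = r^N_t for all 0 ≤ t ≤ 2N−1 (local dependence of the response on the coefficients, due to finite speed of wave propagation). -/
/-- `v` is the solution of the finite discrete-time dynamical system (on sites
`0,…,N+1`, with Dirichlet condition at `N+1`) with coefficients `a`, `b` and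
boundary control `g`. -/
def IsSolV (N : ℕ) (a b g : ℕ → ℝ) (v : ℕ → ℕ → ℝ) : Prop :=
  (∀ n, 1 ≤ n → n ≤ N + 1 → v n 0 = 0) ∧
  (∀ t, v 0 t = g t) ∧
  (∀ t, v (N + 1) t = 0) ∧
  (∀ n t, 1 ≤ n → n ≤ N →
    v n (t + 1) + v n (t - 1) - a n * v (n + 1) t - a (n - 1) * v (n - 1) t
      - b n * v n t = 0)

/-- Local dependence of the response on the coefficients: the response vectors
`r_t = u^δ_{1,t+1}` and `r^N_t = v^δ_{1,t+1}` of the semi-infinite and finite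
systems with the same coefficients coincide for `0 ≤ t ≤ 2N - 1`. -/
theorem response_vectors_coincide
    (a b : ℕ → ℝ) (ha0 : a 0 = 1) (hapos : ∀ n, 1 ≤ n → 0 < a n)
    (N : ℕ) (hN : 1 ≤ N)
    (u v : ℕ → ℕ → ℝ)
    (hu : IsSolU a b deltaCtrl u) (hv : IsSolV N a b deltaCtrl v) :
    ∀ t : ℕ, t ≤ 2 * N - 1 → u 1 (t + 1) = v 1 (t + 1) := by
  obtain ⟨hu0, hub, hurec⟩ := hu
  obtain ⟨hv0, hvb, hvbd, hvrec⟩ := hv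
  -- finite speed of propagation for u: u n t = 0 when t < n
  have hcone : ∀ t n, 1 ≤ n → t < n → u n t = 0 := by
    intro t
    induction t using Nat.strong_induction_on with
    | _ t ih =>
      match t with
      | 0 => intro n hn _; exact hu0 n hn
      | (t+1) =>
        intro n hn hlt
        have hrec' := hurec n t hn
        have h1 : u (n+1) t = 0 := ih t (by omega) (n+1) (by omega) (by omega)
        have h2 : u (n-1) t = 0 := ih t (by omega) (n-1) (by omega) (by omega)
        have h3 : u n t = 0 := ih t (by omega) n hn (by omega)
        have h4 : u n (t-1) = 0 := ih (t-1) (by omega) n hn (by omega)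
        rw [h1, h2, h3, h4] at hrec'
        linarith
  have key : ∀ t n, 1 ≤ n → n ≤ N + 1 → n + t ≤ 2 * N + 1 → u n t = v n t := by
    intro t
    induction t using Nat.strong_induction_on with
    | _ t ih =>
      match t with
      | 0 => intro n hn hn2 _; rw [hu0 n hn, hv0 n hn hn2]
      | (t+1) =>
        intro n hn hn2 hsum
        by_cases hN1 : n = N + 1
        · subst hN1
          rw [hvbd, hcone (t+1) (N+1) (by omega) (by omega)]
        · have hnN : n ≤ N := by omega
          have hrecu := hurec n t hn
          have hrecv := hvrec n t hn hnN
          have e1 : u (n+1) t = v (n+1) t :=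
            ih t (by omega) (n+1) (by omega) (by omega) (by omega)
          have e2 : u (n-1) t = v (n-1) t := by
            rcases Nat.eq_or_lt_of_le hn with h | h
            · have hz : n - 1 = 0 := by omega
              rw [hz, hub, hvb]
            · exact ih t (by omega) (n-1) (by omega) (by omega) (by omega)
          have e3 : u n t = v n t := ih t (by omega) n hn (by omega) (by omega)
          have e4 : u n (t-1) = v n (t-1) := ih (t-1) (by omega) n hn (by omega) (by omega)
          rw [e1, e2, e3, e4] at hrecu
          linarith
  intro t ht
  exact key (t+1) 1 le_rfl (by omega) (by omega)
end

section
/- Let B ≥ 1 and let a, b : ℕ → ℝ satisfy a 0 = 1, a n > 0 and max(a n, |b n|) ≤ B for all n ≥ 1. Then the solution of the semi-infinite discrete-time dynamical system with control δ satisfies |u^δ_{n,t}| ≤ (3B+1)^t for all n ≥ 1 and t ≥ 0. -/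
/-- Exponential bound on the solution of the semi-infinite system with control δ:
`|u^δ_{n,t}| ≤ (3B+1)^t`. -/
theorem delta_solution_bound_semiinfinite
    (B : ℝ) (hB : 1 ≤ B) (a b : ℕ → ℝ) (ha0 : a 0 = 1)
    (hapos : ∀ n, 1 ≤ n → 0 < a n)
    (hbound : ∀ n, 1 ≤ n → max (a n) |b n| ≤ B)
    (u : ℕ → ℕ → ℝ) (hu : IsSolU a b deltaCtrl u) :
    ∀ n t : ℕ, 1 ≤ n → |u n t| ≤ (3 * B + 1) ^ t := by
  obtain ⟨h0, hctrl, hrec⟩ := hu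
  have h1le : (1:ℝ) ≤ 3 * B + 1 := by linarith
  have h0le : (0:ℝ) ≤ 3 * B + 1 := by linarith
  have haB : ∀ n : ℕ, 0 ≤ a n ∧ a n ≤ B := by
    intro n
    match n with
    | 0 => exact ⟨by rw [ha0]; norm_num, by rw [ha0]; exact hB⟩
    | n+1 =>
      refine ⟨(hapos (n+1) (by omega)).le, ?_⟩
      exact le_trans (le_max_left _ _) (hbound (n+1) (by omega))
  have hbB : ∀ n : ℕ, 1 ≤ n → |b n| ≤ B := fun n hn =>
    le_trans (le_max_right _ _) (hbound n hn)
  have key : ∀ t n : ℕ, |u n t| ≤ (3 * B + 1) ^ t := by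
    intro t
    induction t using Nat.strong_induction_on with
    | _ t ih =>
      intro n
      match t, n with
      | 0, 0 => simp [hctrl 0, deltaCtrl]
      | 0, n+1 => simp [h0 (n+1) (by omega)]
      | t+1, 0 =>
        rw [hctrl (t+1)]
        simp only [deltaCtrl, Nat.succ_ne_zero, if_false]
        simpa using pow_nonneg h0le (t+1)
      | t+1, n+1 =>
        have hr := hrec (n+1) t (by omega)
        simp only [Nat.add_sub_cancel] at hr
        have heq : u (n+1) (t+1)
            = a (n+1) * u (n+2) t + a n * u n t + b (n+1) * u (n+1) t
              - u (n+1) (t-1) := by linarith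
        have X : ∀ m, |u m t| ≤ (3 * B + 1) ^ t := ih t (by omega)
        have Y : |u (n+1) (t-1)| ≤ (3 * B + 1) ^ t := by
          calc |u (n+1) (t-1)| ≤ (3 * B + 1) ^ (t-1) := ih (t-1) (by omega) _
            _ ≤ (3 * B + 1) ^ t := pow_le_pow_right₀ h1le (Nat.sub_le t 1)
        have hX : (0:ℝ) ≤ (3 * B + 1) ^ t := pow_nonneg h0le t
        have b1 : |a (n+1) * u (n+2) t| ≤ B * (3 * B + 1) ^ t := by
          rw [abs_mul, abs_of_nonneg (haB (n+1)).1]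
          exact mul_le_mul (haB (n+1)).2 (X _) (abs_nonneg _) (by linarith)
        have b2 : |a n * u n t| ≤ B * (3 * B + 1) ^ t := by
          rw [abs_mul, abs_of_nonneg (haB n).1]
          exact mul_le_mul (haB n).2 (X _) (abs_nonneg _) (by linarith)
        have b3 : |b (n+1) * u (n+1) t| ≤ B * (3 * B + 1) ^ t := by
          rw [abs_mul]
          exact mul_le_mul (hbB (n+1) (by omega)) (X _) (abs_nonneg _) (by linarith)
        calc |u (n+1) (t+1)|
            ≤ |a (n+1) * u (n+2) t| + |a n * u n t| + |b (n+1) * u (n+1) t|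
              + |u (n+1) (t-1)| := by
              rw [heq]
              have h1 := abs_sub (a (n+1) * u (n+2) t + a n * u n t
                + b (n+1) * u (n+1) t) (u (n+1) (t-1))
              have h2 := abs_add_three (a (n+1) * u (n+2) t) (a n * u n t)
                (b (n+1) * u (n+1) t)
              linarith
          _ ≤ B * (3 * B + 1) ^ t + B * (3 * B + 1) ^ t + B * (3 * B + 1) ^ t
              + (3 * B + 1) ^ t := by linarith
          _ = (3 * B + 1) ^ (t+1) := by ring
  intro n t _
  exact key t n
end

section
/- Let B ≥ 1 and let a, b : ℕ → ℝ satisfy a 0 = 1, a n > 0 and max(a n, |b n|) ≤ B for all n ≥ 1. Let z ∈ ℂ with 0 < |z| < 1/(3B+1) and set λ := z + 1/z. Then for every n ≥ 0 the series û_n := −∑_{t=0}^∞ z^t u^δ_{n,t} converges absolutely, û_0 = −1, and û satisfies the Jacobi difference equation a_{n−1} û_{n−1} + b_n û_n + a_n û_{n+1} = λ û_n for all n ≥ 1. -/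
/-- For `0 < |z| < 1/(3B+1)` and `λ = z + 1/z`, the generating function
`û_n = -∑_{t=0}^∞ z^t u^δ_{n,t}` converges absolutely, satisfies `û_0 = -1`
and the Jacobi difference equation
`a_{n-1} û_{n-1} + b_n û_n + a_n û_{n+1} = λ û_n` for `n ≥ 1`. -/
theorem generating_function_semiinfinite
    (B : ℝ) (hB : 1 ≤ B) (a b : ℕ → ℝ) (ha0 : a 0 = 1)
    (hapos : ∀ n, 1 ≤ n → 0 < a n)
    (hbound : ∀ n, 1 ≤ n → max (a n) |b n| ≤ B)
    (u : ℕ → ℕ → ℝ) (hu : IsSolU a b deltaCtrl u)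
    (z : ℂ) (hz0 : 0 < ‖z‖) (hz : ‖z‖ < 1 / (3 * B + 1)) :
    (∀ n : ℕ, Summable (fun t : ℕ => ‖z ^ t * (u n t : ℂ)‖)) ∧
    (-∑' t : ℕ, z ^ t * (u 0 t : ℂ)) = -1 ∧
    (∀ n : ℕ, 1 ≤ n →
      (a (n - 1) : ℂ) * (-∑' t : ℕ, z ^ t * (u (n - 1) t : ℂ))
        + (b n : ℂ) * (-∑' t : ℕ, z ^ t * (u n t : ℂ))
        + (a n : ℂ) * (-∑' t : ℕ, z ^ t * (u (n + 1) t : ℂ))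
      = (z + 1 / z) * (-∑' t : ℕ, z ^ t * (u n t : ℂ))) := by
  have hz' : z ≠ 0 := by
    intro h; rw [h] at hz0; simp at hz0
  have haB : ∀ n, |a n| ≤ B := by
    intro n
    cases n with
    | zero => rw [ha0]; simpa using hB
    | succ m =>
      rw [abs_of_pos (hapos _ (by omega))]
      exact le_trans (le_max_left _ _) (hbound _ (by omega))
  have hbB : ∀ n, 1 ≤ n → |b n| ≤ B := fun n hn =>
    le_trans (le_max_right _ _) (hbound n hn)
  set C : ℝ := 3 * B + 1 with hCdef
  have hC1 : (1:ℝ) ≤ C := by simp only [hCdef]; linarith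
  have hC0 : (0:ℝ) < C := by linarith
  -- growth bound
  have key : ∀ t n, |u n t| ≤ C ^ t := by
    intro t
    induction t using Nat.strong_induction_on with
    | _ t ih =>
      intro n
      match t, n with
      | 0, 0 =>
        have : u 0 0 = 1 := by rw [hu.2.1]; rfl
        simp [this]
      | 0, n+1 =>
        rw [hu.1 (n+1) (by omega)]; simp
      | t+1, 0 =>
        have : u 0 (t+1) = 0 := by rw [hu.2.1]; simp [deltaCtrl]
        rw [this]; simp; positivity
      | t+1, n+1 =>
        have hrec := hu.2.2 (n+1) t (by omega)
        simp only [Nat.add_sub_cancel] at hrec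
        have heq : u (n+1) (t+1)
            = a (n+1) * u (n+2) t + a n * u n t + b (n+1) * u (n+1) t
              - u (n+1) (t-1) := by linarith
        have h1 := ih t (by omega) (n+2)
        have h2 := ih t (by omega) n
        have h3 := ih t (by omega) (n+1)
        have h4 : |u (n+1) (t-1)| ≤ C ^ t :=
          le_trans (ih (t-1) (by omega) (n+1))
            (pow_le_pow_right₀ hC1 (by omega))
        have hCt : (0:ℝ) ≤ C ^ t := by positivity
        have e1 : |a (n+1) * u (n+2) t| ≤ B * C ^ t := by
          rw [abs_mul]; exact mul_le_mul (haB _) h1 (abs_nonneg _) (by linarith)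
        have e2 : |a n * u n t| ≤ B * C ^ t := by
          rw [abs_mul]; exact mul_le_mul (haB _) h2 (abs_nonneg _) (by linarith)
        have e3 : |b (n+1) * u (n+1) t| ≤ B * C ^ t := by
          rw [abs_mul]; exact mul_le_mul (hbB _ (by omega)) h3 (abs_nonneg _) (by linarith)
        rw [heq, pow_succ]
        rw [abs_le]
        constructor
        · nlinarith [neg_abs_le (a (n+1) * u (n+2) t), neg_abs_le (a n * u n t),
            neg_abs_le (b (n+1) * u (n+1) t), le_abs_self (u (n+1) (t-1))]
        · nlinarith [le_abs_self (a (n+1) * u (n+2) t), le_abs_self (a n * u n t),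
            le_abs_self (b (n+1) * u (n+1) t), neg_abs_le (u (n+1) (t-1))]
  have hzC : ‖z‖ * C < 1 := by
    rw [lt_div_iff₀ hC0] at hz; exact hz
  -- absolute summability
  have hsum : ∀ n : ℕ, Summable (fun t : ℕ => ‖z ^ t * (u n t : ℂ)‖) := by
    intro n
    apply Summable.of_nonneg_of_le (fun t => norm_nonneg _)
      (fun t => ?_) (summable_geometric_of_lt_one (by positivity) hzC)
    calc ‖z ^ t * (u n t : ℂ)‖
        = ‖z‖ ^ t * |u n t| := by
          rw [norm_mul, norm_pow, Complex.norm_real, Real.norm_eq_abs]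
      _ ≤ ‖z‖ ^ t * C ^ t := by
          exact mul_le_mul_of_nonneg_left (key t n) (by positivity)
      _ = (‖z‖ * C) ^ t := (mul_pow _ _ _).symm
  have hsumC : ∀ n : ℕ, Summable (fun t : ℕ => z ^ t * (u n t : ℂ)) := by
    intro n
    apply Summable.of_norm
    simpa using hsum n
  refine ⟨hsum, ?_, ?_⟩
  · have h0 : (∑' t : ℕ, z ^ t * (u 0 t : ℂ)) = 1 := by
      rw [tsum_eq_single 0 ?_]
      · have : u 0 0 = 1 := by rw [hu.2.1]; rfl
        simp [this]
      · intro t ht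
        have : u 0 t = 0 := by rw [hu.2.1]; simp [deltaCtrl, ht]
        simp [this]
    rw [h0]
  · intro n hn
    obtain ⟨m, rfl⟩ : ∃ m, n = m + 1 := ⟨n - 1, by omega⟩
    simp only [Nat.add_sub_cancel]
    set S : ℕ → ℂ := fun k => ∑' t : ℕ, z ^ t * (u k t : ℂ) with hSdef
    have hu0 : u (m+1) 0 = 0 := hu.1 _ (by omega)
    -- summability of the shifted series
    have hshift1 : Summable (fun t : ℕ => z ^ t * (u (m+1) (t+1) : ℂ)) := by
      have h := ((summable_nat_add_iff 1).mpr (hsumC (m+1))).mul_left z⁻¹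
      apply h.congr
      intro t
      simp only [pow_succ]
      field_simp
    have hsB' : Summable (fun t : ℕ => z ^ t * (u (m+1) (t-1) : ℂ)) := by
      apply (summable_nat_add_iff 1).mp
      apply ((hsumC (m+1)).mul_left z).congr
      intro t
      simp only [Nat.add_sub_cancel, pow_succ]
      ring
    set A : ℂ := ∑' t : ℕ, z ^ t * (u (m+1) (t+1) : ℂ) with hAdef
    set Bs : ℂ := ∑' t : ℕ, z ^ t * (u (m+1) (t-1) : ℂ) with hBdef
    have Fact1 : z * A = S (m+1) := by
      have h := Summable.tsum_eq_zero_add (hsumC (m+1))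
      rw [hu0] at h
      simp only [pow_zero, Complex.ofReal_zero, mul_zero, zero_add] at h
      rw [hSdef]
      simp only
      rw [h, hAdef, ← tsum_mul_left]
      exact tsum_congr fun t => by rw [pow_succ]; ring
    have Fact2 : Bs = z * S (m+1) := by
      rw [hBdef, Summable.tsum_eq_zero_add hsB']
      simp only [Nat.zero_sub, pow_zero, hu0, Complex.ofReal_zero, mul_zero, zero_add,
        Nat.add_sub_cancel]
      rw [hSdef]
      simp only
      rw [← tsum_mul_left]
      exact tsum_congr fun t => by rw [pow_succ]; ring
    have Fact3 : A + Bs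
        = (a (m+1) : ℂ) * S (m+2) + (a m : ℂ) * S m + (b (m+1) : ℂ) * S (m+1) := by
      rw [hAdef, hBdef, hSdef]
      simp only
      rw [← Summable.tsum_add hshift1 hsB', ← tsum_mul_left, ← tsum_mul_left, ← tsum_mul_left,
        ← Summable.tsum_add ((hsumC (m+2)).mul_left _) ((hsumC m).mul_left _),
        ← Summable.tsum_add (((hsumC (m+2)).mul_left _).add ((hsumC m).mul_left _))
          ((hsumC (m+1)).mul_left _)]
      apply tsum_congr
      intro t
      have hrec := hu.2.2 (m+1) t (by omega)
      simp only [Nat.add_sub_cancel] at hrec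
      have hr : (u (m+1) (t+1) : ℂ) + (u (m+1) (t-1) : ℂ)
          = (a (m+1) : ℂ) * (u (m+2) t : ℂ) + (a m : ℂ) * (u m t : ℂ)
            + (b (m+1) : ℂ) * (u (m+1) t : ℂ) := by
        have : u (m+1) (t+1) + u (m+1) (t-1)
            = a (m+1) * u (m+2) t + a m * u m t + b (m+1) * u (m+1) t := by linarith
        exact_mod_cast congrArg (Complex.ofReal) this
      linear_combination (z ^ t) * hr
    have hfin : (a m : ℂ) * S m + (b (m+1) : ℂ) * S (m+1) + (a (m+1) : ℂ) * S (m+2)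
        = (z + 1/z) * S (m+1) := by
      rw [← Fact1] at Fact2 ⊢
      rw [Fact2] at Fact3
      have hz1 : (z + 1/z) * (z * A) = A + z * (z * A) := by
        field_simp; ring
      rw [hz1]
      linear_combination -Fact3 + ((b (m+1) : ℝ) : ℂ) * Fact1
    show (a m : ℂ) * (-S m) + (b (m+1) : ℂ) * (-S (m+1)) + (a (m+1) : ℂ) * (-S (m+2))
        = (z + 1/z) * (-S (m+1))
    linear_combination (-1 : ℂ) * hfin
end

section
/- Let B ≥ 1 and let a, b : ℕ → ℝ satisfy a 0 = 1, a n > 0 and max(a n, |b n|) ≤ B for all n ≥ 1, and fix N ≥ 1. Let z ∈ ℂ with 0 < |z| < 1/(3B+1) and set λ := z + 1/z. Then for every 0 ≤ n ≤ N+1 the series v̂_n := −∑_{t=0}^∞ z^t v^δ_{n,t} converges absolutely, v̂_0 = −1, v̂_{N+1} = 0, and v̂ satisfies the Jacobi difference equation a_{n−1} v̂_{n−1} + b_n v̂_n + a_n v̂_{n+1} = λ v̂_n for all 1 ≤ n ≤ N. -/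
/-- For `0 < |z| < 1/(3B+1)` and `λ = z + 1/z`, the generating function
`v̂_n = -∑_{t=0}^∞ z^t v^δ_{n,t}` converges absolutely, satisfies `v̂_0 = -1`,
`v̂_{N+1} = 0`, and the Jacobi difference equation
`a_{n-1} v̂_{n-1} + b_n v̂_n + a_n v̂_{n+1} = λ v̂_n` for `1 ≤ n ≤ N`. -/
theorem generating_function_finite
    (B : ℝ) (hB : 1 ≤ B) (a b : ℕ → ℝ) (ha0 : a 0 = 1)
    (hapos : ∀ n, 1 ≤ n → 0 < a n)
    (hbound : ∀ n, 1 ≤ n → max (a n) |b n| ≤ B)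
    (N : ℕ) (hN : 1 ≤ N)
    (v : ℕ → ℕ → ℝ) (hv : IsSolV N a b deltaCtrl v)
    (z : ℂ) (hz0 : 0 < ‖z‖) (hz : ‖z‖ < 1 / (3 * B + 1)) :
    (∀ n : ℕ, n ≤ N + 1 → Summable (fun t : ℕ => ‖z ^ t * (v n t : ℂ)‖)) ∧
    (-∑' t : ℕ, z ^ t * (v 0 t : ℂ)) = -1 ∧
    (-∑' t : ℕ, z ^ t * (v (N + 1) t : ℂ)) = 0 ∧
    (∀ n : ℕ, 1 ≤ n → n ≤ N →
      (a (n - 1) : ℂ) * (-∑' t : ℕ, z ^ t * (v (n - 1) t : ℂ))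
        + (b n : ℂ) * (-∑' t : ℕ, z ^ t * (v n t : ℂ))
        + (a n : ℂ) * (-∑' t : ℕ, z ^ t * (v (n + 1) t : ℂ))
      = (z + 1 / z) * (-∑' t : ℕ, z ^ t * (v n t : ℂ))) := by
  obtain ⟨hv0, hvg, hvN, hrec⟩ := hv
  set C : ℝ := 3 * B + 1 with hCdef
  have hC1 : (1:ℝ) ≤ C := by rw [hCdef]; linarith
  have hC0 : (0:ℝ) < C := by linarith
  have hz' : z ≠ 0 := by
    intro h; rw [h] at hz0; simp at hz0
  -- growth bound
  have key : ∀ t : ℕ, ∀ n, n ≤ N + 1 → |v n t| ≤ C ^ t := by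
    intro t
    induction t using Nat.strong_induction_on with
    | _ t ih =>
      intro n hn
      match t with
      | 0 =>
        rcases Nat.eq_zero_or_pos n with h | h
        · subst h; rw [hvg 0]; simp [deltaCtrl]
        · rw [hv0 n h hn]; simp
      | (t' + 1) =>
        rcases Nat.eq_zero_or_pos n with h | h
        · subst h
          have hdz : deltaCtrl (t' + 1) = 0 := by simp [deltaCtrl]
          rw [hvg, hdz, abs_zero]
          positivity
        · rcases eq_or_lt_of_le hn with he | hlt
          · rw [he, hvN]; simp only [abs_zero]; positivity
          · have h2 : n ≤ N := by omega
            have e := hrec n t' h h2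
            have e' : v n (t' + 1) = a n * v (n+1) t' + a (n-1) * v (n-1) t' + b n * v n t'
                - v n (t'-1) := by linarith
            have hV1 := ih t' (by omega) (n+1) (by omega)
            have hV2 := ih t' (by omega) (n-1) (by omega)
            have hV3 := ih t' (by omega) n (by omega)
            have hV4 : |v n (t'-1)| ≤ C ^ t' := by
              refine le_trans (ih (t'-1) (by omega) n (by omega)) ?_
              exact pow_le_pow_right₀ hC1 (Nat.sub_le _ _)
            have hA1 : |a n| ≤ B := by
              rw [abs_of_pos (hapos n h)]; exact le_trans (le_max_left _ _) (hbound n h)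
            have hA2 : |a (n-1)| ≤ B := by
              rcases Nat.eq_zero_or_pos (n-1) with h0 | h0
              · rw [h0, ha0]; simpa using hB
              · rw [abs_of_pos (hapos _ h0)]
                exact le_trans (le_max_left _ _) (hbound _ h0)
            have hA3 : |b n| ≤ B := le_trans (le_max_right _ _) (hbound n h)
            have hCpow : (0:ℝ) ≤ C ^ t' := by positivity
            have hBp : (0:ℝ) ≤ B := by linarith
            have p1 : |a n * v (n+1) t'| ≤ B * C ^ t' := by
              rw [abs_mul]; exact mul_le_mul hA1 hV1 (abs_nonneg _) hBp
            have p2 : |a (n-1) * v (n-1) t'| ≤ B * C ^ t' := by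
              rw [abs_mul]; exact mul_le_mul hA2 hV2 (abs_nonneg _) hBp
            have p3 : |b n * v n t'| ≤ B * C ^ t' := by
              rw [abs_mul]; exact mul_le_mul hA3 hV3 (abs_nonneg _) hBp
            have q1 := abs_le.mp p1
            have q2 := abs_le.mp p2
            have q3 := abs_le.mp p3
            have q4 := abs_le.mp hV4
            have expand : C ^ (t' + 1) = 3*B*C^t' + C^t' := by
              rw [pow_succ, hCdef]; ring
            rw [e', abs_le]
            constructor
            · rw [expand]; linarith [q1.1, q2.1, q3.1, q4.2]
            · rw [expand]; linarith [q1.2, q2.2, q3.2, q4.1]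
  have hSumAbs : ∀ n, n ≤ N + 1 → Summable (fun t : ℕ => ‖z ^ t * (v n t : ℂ)‖) := by
    intro n hn
    have hr0 : 0 ≤ ‖z‖ * C := by positivity
    have hr1 : ‖z‖ * C < 1 := (lt_div_iff₀ hC0).mp hz
    refine Summable.of_nonneg_of_le (fun t => by positivity) (fun t => ?_)
      (summable_geometric_of_lt_one hr0 hr1)
    rw [norm_mul, norm_pow, Complex.norm_real, Real.norm_eq_abs, mul_pow]
    exact mul_le_mul_of_nonneg_left (key t n hn) (by positivity)
  have hSum : ∀ n, n ≤ N + 1 → Summable (fun t : ℕ => z ^ t * (v n t : ℂ)) := fun n hn =>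
    Summable.of_norm (by simpa using hSumAbs n hn)
  refine ⟨hSumAbs, ?_, ?_, ?_⟩
  · have h1 : ∑' t : ℕ, z ^ t * (v 0 t : ℂ) = 1 := by
      rw [tsum_eq_single 0 (fun t ht => by simp [hvg, deltaCtrl, ht])]
      simp [hvg, deltaCtrl]
    rw [h1]
  · simp [hvN]
  · intro n h1 h2
    have hn1 : n - 1 ≤ N + 1 := by omega
    have hnn : n ≤ N + 1 := by omega
    have hn2 : n + 1 ≤ N + 1 := by omega
    have hvn0 : ((v n 0 : ℝ) : ℂ) = 0 := by rw [hv0 n h1 hnn]; norm_num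
    have hs := hSum n hnn
    have hg1' : Summable (fun t : ℕ => z ^ (t+1) * (v n (t+1) : ℂ)) :=
      (summable_nat_add_iff 1).mpr hs
    have hg1 : Summable (fun t : ℕ => z ^ t * (v n (t+1) : ℂ)) := by
      refine (hg1'.mul_left z⁻¹).congr fun t => ?_
      field_simp
      ring
    have hT1 : ∑' t : ℕ, z ^ t * (v n (t+1) : ℂ) = (∑' t : ℕ, z ^ t * (v n t : ℂ)) / z := by
      have h0 := Summable.tsum_eq_zero_add hs
      rw [pow_zero, one_mul, hvn0, zero_add] at h0
      have h2' : ∑' t : ℕ, z ^ (t+1) * (v n (t+1) : ℂ)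
          = z * ∑' t : ℕ, z ^ t * (v n (t+1) : ℂ) := by
        rw [← tsum_mul_left]
        exact tsum_congr fun t => by ring
      rw [h2'] at h0
      rw [h0, mul_comm, mul_div_assoc, div_self hz', mul_one]
    have hg2 : Summable (fun t : ℕ => z ^ t * (v n (t-1) : ℂ)) := by
      refine (summable_nat_add_iff 1).mp ?_
      refine (hs.mul_left z).congr fun t => ?_
      simp only [Nat.add_sub_cancel]
      ring
    have hT2 : ∑' t : ℕ, z ^ t * (v n (t-1) : ℂ) = z * ∑' t : ℕ, z ^ t * (v n t : ℂ) := by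
      have h0 := Summable.tsum_eq_zero_add hg2
      rw [h0]
      have e2 : ∑' t : ℕ, z ^ (t+1) * (v n (t+1-1) : ℂ)
          = z * ∑' t : ℕ, z ^ t * (v n t : ℂ) := by
        rw [← tsum_mul_left]
        exact tsum_congr fun t => by simp only [Nat.add_sub_cancel]; ring
      simp only [Nat.zero_sub, pow_zero, one_mul, hvn0, zero_add]
      exact e2
    have hpt : ∀ t : ℕ,
        (a (n-1) : ℂ) * (z^t * (v (n-1) t : ℂ)) + (b n : ℂ) * (z^t * (v n t : ℂ))
          + (a n : ℂ) * (z^t * (v (n+1) t : ℂ))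
        = z^t * (v n (t+1) : ℂ) + z^t * (v n (t-1) : ℂ) := by
      intro t
      have h := hrec n t h1 h2
      have hc : ((v n (t + 1) + v n (t - 1) - a n * v (n + 1) t - a (n - 1) * v (n - 1) t
          - b n * v n t : ℝ) : ℂ) = 0 := by exact_mod_cast h
      push_cast at hc
      linear_combination (-(z ^ t)) * hc
    have hmain :
        (a (n-1) : ℂ) * ∑' t : ℕ, z ^ t * (v (n-1) t : ℂ)
          + (b n : ℂ) * ∑' t : ℕ, z ^ t * (v n t : ℂ)
          + (a n : ℂ) * ∑' t : ℕ, z ^ t * (v (n+1) t : ℂ)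
        = (∑' t : ℕ, z ^ t * (v n t : ℂ)) / z + z * ∑' t : ℕ, z ^ t * (v n t : ℂ) := by
      rw [← tsum_mul_left, ← tsum_mul_left, ← tsum_mul_left,
        ← Summable.tsum_add ((hSum _ hn1).mul_left _) ((hSum n hnn).mul_left _),
        ← Summable.tsum_add (((hSum _ hn1).mul_left _).add ((hSum n hnn).mul_left _))
          ((hSum _ hn2).mul_left _)]
      rw [tsum_congr hpt, Summable.tsum_add hg1 hg2, hT1, hT2]
    linear_combination -hmain
end

section
/- For every λ ∈ ℂ with Im λ > 0, the quadratic polynomial z² − λz + 1 has exactly one root z₀ with |z₀| < 1 (its other root has modulus > 1), and this root satisfies Im z₀ < 0. -/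
lemma quadratic_no_root_on_circle (lam z : ℂ) (hlam : 0 < lam.im)
    (hz : z ^ 2 - lam * z + 1 = 0) : ‖z‖ ≠ 1 := by
  intro h1
  have hz0 : z ≠ 0 := by
    intro h; rw [h] at h1; simp at h1
  have hl : lam = z + z⁻¹ := by
    field_simp
    linear_combination -hz
  have him : lam.im = z.im + (z⁻¹).im := by rw [hl]; simp
  have hn : Complex.normSq z = 1 := by
    rw [← Complex.sq_norm, h1]; norm_num
  rw [Complex.inv_im, hn] at him
  simp at him
  linarith

lemma quadratic_aux (lam z₁ z₂ : ℂ) (hlam : 0 < lam.im)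
    (hsum : z₁ + z₂ = lam) (hprod : z₁ * z₂ = 1)
    (h1 : ‖z₁‖ < 1) :
    ∃ z₀ : ℂ,
      (z₀ ^ 2 - lam * z₀ + 1 = 0 ∧ ‖z₀‖ < 1 ∧ z₀.im < 0) ∧
      (∀ z : ℂ, z ^ 2 - lam * z + 1 = 0 → z ≠ z₀ → 1 < ‖z‖) := by
  have hz10 : z₁ ≠ 0 := by
    intro h; rw [h] at hprod; simp at hprod
  have habs : ‖z₁‖ * ‖z₂‖ = 1 := by
    rw [← norm_mul, hprod]; simp
  have habs1pos : 0 < ‖z₁‖ := by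
    simpa using hz10
  refine ⟨z₁, ⟨?_, h1, ?_⟩, ?_⟩
  · linear_combination z₁ * hsum - hprod
  · -- Im z₁ < 0
    have hz2 : z₂ = z₁⁻¹ := by
      field_simp
      linear_combination hprod
    have hn0 : 0 < Complex.normSq z₁ := Complex.normSq_pos.mpr hz10
    have hn1 : Complex.normSq z₁ < 1 := by
      rw [← Complex.sq_norm]; nlinarith
    have him : lam.im = z₁.im + (z₁⁻¹).im := by
      rw [← hsum, hz2]; simp
    rw [Complex.inv_im] at him
    have key : lam.im * Complex.normSq z₁ = z₁.im * (Complex.normSq z₁ - 1) := by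
      rw [him]; field_simp; ring
    nlinarith [mul_pos hlam hn0]
  · intro z hz hne
    have hfac : (z - z₁) * (z - z₂) = 0 := by
      linear_combination hz - z * hsum + hprod
    rcases mul_eq_zero.mp hfac with h | h
    · exact absurd (sub_eq_zero.mp h) hne
    · have : z = z₂ := sub_eq_zero.mp h
      subst this
      nlinarith [norm_nonneg z]

/-- For `Im λ > 0` the quadratic `z² - λz + 1` has exactly one root `z₀` with
`|z₀| < 1` (every other root has modulus `> 1`), and this root has `Im z₀ < 0`. -/
theorem quadratic_root_in_disc (lam : ℂ) (hlam : 0 < lam.im) :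
    ∃ z₀ : ℂ,
      (z₀ ^ 2 - lam * z₀ + 1 = 0 ∧ ‖z₀‖ < 1 ∧ z₀.im < 0) ∧
      (∀ z : ℂ, z ^ 2 - lam * z + 1 = 0 → z ≠ z₀ → 1 < ‖z‖) := by
  obtain ⟨d, hd⟩ : ∃ d : ℂ, d ^ 2 = lam ^ 2 - 4 := by
    obtain ⟨d, hd⟩ := IsAlgClosed.exists_pow_nat_eq (lam ^ 2 - 4) (n := 2) (by norm_num)
    exact ⟨d, hd⟩
  set z₁ : ℂ := (lam + d) / 2 with hz1
  set z₂ : ℂ := (lam - d) / 2 with hz2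
  have hsum : z₁ + z₂ = lam := by rw [hz1, hz2]; ring
  have hprod : z₁ * z₂ = 1 := by
    rw [hz1, hz2]; linear_combination (-1/4 : ℂ) * hd
  have hroot1 : z₁ ^ 2 - lam * z₁ + 1 = 0 := by
    linear_combination z₁ * hsum - hprod
  have hroot2 : z₂ ^ 2 - lam * z₂ + 1 = 0 := by
    linear_combination z₂ * hsum - hprod
  have hne1 := quadratic_no_root_on_circle lam z₁ hlam hroot1
  have hne2 := quadratic_no_root_on_circle lam z₂ hlam hroot2
  have habs : ‖z₁‖ * ‖z₂‖ = 1 := by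
    rw [← norm_mul, hprod]; simp
  rcases lt_or_gt_of_ne hne1 with h | h
  · exact quadratic_aux lam z₁ z₂ hlam hsum hprod h
  · have h2 : ‖z₂‖ < 1 := by
      rcases lt_or_gt_of_ne hne2 with h' | h'
      · exact h'
      · nlinarith
    exact quadratic_aux lam z₂ z₁ hlam (by rw [← hsum]; ring) (by rw [← hprod]; ring) h2
end

section
/- Let λ ∈ ℂ with Im λ > 0 and let z(λ) be the unique root of z² − λz + 1 = 0 with |z| < 1. Then for every N ≥ 0 the Chebyshev polynomial of the second kind satisfies U_N(λ/2) ≠ 0, and the ratio of consecutive Chebyshev polynomials converges: U_{N−1}(λ/2)/U_N(λ/2) → z(λ) as N → ∞. -/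
open Filter Polynomial

lemma cheb_closed (w u : ℂ) (hwu : w * u = 1) (hww : w - u ≠ 0) (N : ℕ) :
    Polynomial.eval ((w + u) / 2) (Polynomial.Chebyshev.U ℂ (N : ℤ)) =
      (w ^ (N + 1) - u ^ (N + 1)) / (w - u) := by
  induction N using Nat.twoStepInduction with
  | zero => simp [Polynomial.Chebyshev.U_zero, div_self hww]
  | one =>
    rw [show ((1 : ℕ) : ℤ) = 1 by norm_num, Polynomial.Chebyshev.U_one]
    simp only [Polynomial.eval_mul, Polynomial.eval_ofNat, Polynomial.eval_X]
    field_simp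
    ring
  | more n ih1 ih2 =>
    have h2 : ((n + 2 : ℕ) : ℤ) = (n : ℤ) + 2 := by push_cast; ring
    rw [h2, Polynomial.Chebyshev.U_add_two]
    simp only [Polynomial.eval_sub, Polynomial.eval_mul, Polynomial.eval_ofNat,
      Polynomial.eval_X]
    rw [show ((n : ℤ) + 1) = ((n + 1 : ℕ) : ℤ) by push_cast; ring, ih2, ih1]
    field_simp
    linear_combination (w * w ^ n - u * u ^ n) * hwu

/-- For `Im λ > 0`, the Chebyshev polynomials of the second kind satisfy
`U_N(λ/2) ≠ 0` for all `N ≥ 0`, and `U_{N-1}(λ/2)/U_N(λ/2) → z(λ)` as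
`N → ∞`, where `z(λ)` is the root of `z² - λz + 1 = 0` with `|z| < 1`. -/
theorem chebyshev_ratio_tendsto_root
    (lam : ℂ) (hlam : 0 < lam.im)
    (z : ℂ) (hroot : z ^ 2 - lam * z + 1 = 0) (hz : ‖z‖ < 1) :
    (∀ N : ℕ, Polynomial.eval (lam / 2) (Polynomial.Chebyshev.U ℂ (N : ℤ)) ≠ 0) ∧
    Tendsto (fun N : ℕ =>
        Polynomial.eval (lam / 2) (Polynomial.Chebyshev.U ℂ ((N : ℤ) - 1)) /
          Polynomial.eval (lam / 2) (Polynomial.Chebyshev.U ℂ (N : ℤ)))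
      atTop (nhds z) := by
  have hz0 : z ≠ 0 := by
    intro h; rw [h] at hroot; norm_num at hroot
  set w : ℂ := z⁻¹ with hwdef
  have hwu : w * z = 1 := inv_mul_cancel₀ hz0
  have hlam2 : lam = w + z := by
    linear_combination (-w) * hroot + (z - lam) * hwu
  have habsw : 1 < ‖w‖ := by
    rw [hwdef, norm_inv]
    rw [lt_inv_comm₀ (by positivity) (by simp [norm_pos_iff.mpr hz0])]
    simpa using hz
  have hww : w - z ≠ 0 := by
    intro h
    have : ‖w‖ = ‖z‖ := by rw [sub_eq_zero] at h; rw [h]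
    linarith
  have key : ∀ N : ℕ, Polynomial.eval (lam / 2) (Polynomial.Chebyshev.U ℂ (N : ℤ)) =
      (w ^ (N + 1) - z ^ (N + 1)) / (w - z) := by
    intro N
    rw [hlam2]
    exact cheb_closed w z hwu hww N
  have hnum : ∀ N : ℕ, w ^ (N + 1) - z ^ (N + 1) ≠ 0 := by
    intro N
    intro h
    rw [sub_eq_zero] at h
    have h1 : ‖w ^ (N + 1)‖ = ‖z ^ (N + 1)‖ := by rw [h]
    rw [norm_pow, norm_pow] at h1
    have h2 : ‖z‖ ^ (N + 1) < 1 := pow_lt_one₀ (norm_nonneg z) hz (Nat.succ_ne_zero N)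
    have h3 : 1 < ‖w‖ ^ (N + 1) := one_lt_pow₀ habsw (Nat.succ_ne_zero N)
    linarith
  have hNe : ∀ N : ℕ, Polynomial.eval (lam / 2) (Polynomial.Chebyshev.U ℂ (N : ℤ)) ≠ 0 := by
    intro N
    rw [key N]
    exact div_ne_zero (hnum N) hww
  refine ⟨hNe, ?_⟩
  have hzn : ∀ N : ℕ, 1 - z ^ (2 * N + 2) ≠ 0 := by
    intro N hcon
    have h1 : ‖z ^ (2 * N + 2)‖ < 1 :=
      by rw [norm_pow]; exact pow_lt_one₀ (norm_nonneg z) hz (by omega)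
    rw [sub_eq_zero] at hcon
    rw [← hcon] at h1; simp at h1
  have heq : ∀ N : ℕ,
      Polynomial.eval (lam / 2) (Polynomial.Chebyshev.U ℂ ((N : ℤ) - 1)) /
        Polynomial.eval (lam / 2) (Polynomial.Chebyshev.U ℂ (N : ℤ)) =
      (z - z ^ (2 * N + 1)) / (1 - z ^ (2 * N + 2)) := by
    intro N
    have hpow : ∀ k : ℕ, w ^ k * z ^ k = 1 := by
      intro k; rw [← mul_pow, hwu, one_pow]
    have hden : z ^ (N + 1) * (w ^ (N + 1) - z ^ (N + 1)) = 1 - z ^ (2 * N + 2) := by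
      linear_combination hpow (N + 1)
    match N with
    | 0 =>
      simp only [Nat.cast_zero, zero_sub, Polynomial.Chebyshev.U_neg_one, Polynomial.eval_zero,
        zero_div]
      rw [pow_one]
      simp
    | (n + 1) =>
      have hidx : ((n + 1 : ℕ) : ℤ) - 1 = ((n : ℕ) : ℤ) := by push_cast; ring
      rw [hidx, key n, key (n + 1), div_div_div_cancel_right₀ hww]
      have e1 : z ^ (n + 2) * (w ^ (n + 1) - z ^ (n + 1)) = z - z ^ (2 * (n + 1) + 1) := by
        linear_combination z * hpow (n + 1)
      have e2 : z ^ (n + 2) * (w ^ (n + 1 + 1) - z ^ (n + 1 + 1)) = 1 - z ^ (2 * (n + 1) + 2) := by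
        linear_combination hpow (n + 2)
      rw [← mul_div_mul_left (w ^ (n + 1) - z ^ (n + 1)) _ (pow_ne_zero (n + 2) hz0), e1, e2]
  refine Tendsto.congr (fun N => (heq N).symm) ?_
  have hz' : ‖z‖ < 1 := by exact hz
  have h0 : Tendsto (fun n : ℕ => z ^ n) atTop (nhds 0) :=
    tendsto_pow_atTop_nhds_zero_of_norm_lt_one hz'
  have hg1 : Tendsto (fun N : ℕ => 2 * N + 1) atTop atTop :=
    StrictMono.tendsto_atTop (fun a b h => by omega)
  have hg2 : Tendsto (fun N : ℕ => 2 * N + 2) atTop atTop :=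
    StrictMono.tendsto_atTop (fun a b h => by omega)
  have h1 : Tendsto (fun N : ℕ => z ^ (2 * N + 1)) atTop (nhds 0) := h0.comp hg1
  have h2 : Tendsto (fun N : ℕ => z ^ (2 * N + 2)) atTop (nhds 0) := h0.comp hg2
  have hd : (1 : ℂ) - 0 ≠ 0 := by norm_num
  have := (((tendsto_const_nhds (x := z)).sub h1).div
    ((tendsto_const_nhds (x := (1:ℂ))).sub h2) hd)
  simp only [sub_zero, div_one] at this
  exact this
end

section
/- For every λ ∈ ℂ with Im λ > 0, the Stieltjes transform of the semicircle-type measure dρ(x) = (2π)⁻¹√(4 − x²) dx on (−2, 2) equals minus the root z(λ): (1/(2π)) ∫_{−2}^{2} √(4 − x²)/(x − λ) dx = −z(λ). -/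
open Complex Set Filter Topology

lemma aux_im_pos (z w : ℂ) (hz : ‖z‖ < 1) (hw : Complex.normSq w = 1)
    (hwim : 0 < w.im) : 0 < (2 * (w - z) / (1 - w * z)).im := by
  have habsw : ‖w‖ = 1 := by
    rw [Complex.norm_def, hw, Real.sqrt_one]
  have hwz : 1 - w * z ≠ 0 := by
    intro h
    have h2 : w * z = 1 := (sub_eq_zero.mp h).symm
    have h1 : ‖w * z‖ = 1 := by rw [h2, norm_one]
    rw [norm_mul, habsw, one_mul] at h1
    exact absurd h1 hz.ne
  have hconjw : w * (starRingEnd ℂ) w = 1 := by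
    rw [Complex.mul_conj, hw]; norm_num
  have hconjz : z * (starRingEnd ℂ) z = (Complex.normSq z : ℂ) := Complex.mul_conj z
  have key : (2 * (w - z)) * (starRingEnd ℂ) (1 - w * z)
      = 2 * (w - (starRingEnd ℂ) z - z + (Complex.normSq z : ℂ) * (starRingEnd ℂ) w) := by
    simp only [map_sub, map_mul, map_one]
    linear_combination (-2 * (starRingEnd ℂ) z) * hconjw + (2 * (starRingEnd ℂ) w) * hconjz
  have him : ((2 * (w - z)) * (starRingEnd ℂ) (1 - w * z)).im
      = 2 * (1 - Complex.normSq z) * w.im := by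
    rw [key]
    simp [Complex.conj_im]
    ring
  have hnormsq : 0 < Complex.normSq (1 - w * z) := by rwa [Complex.normSq_pos]
  have hlt : Complex.normSq z < 1 := by
    have := Complex.sq_norm z
    nlinarith [norm_nonneg z]
  rw [div_eq_mul_inv, Complex.inv_def, ← mul_assoc, Complex.mul_im]
  simp only [Complex.ofReal_re, Complex.ofReal_im, mul_zero, add_zero, zero_mul, zero_add]
  rw [him]
  have h1 : (0:ℝ) < (Complex.normSq (1 - w * z))⁻¹ := by positivity
  have h2 : (0:ℝ) < 2 * (1 - Complex.normSq z) * w.im := by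
    have : 0 < 1 - Complex.normSq z := by linarith
    positivity
  positivity

lemma aux_A_eq (z lam q w : ℂ) (x r : ℝ) (hz0 : z ≠ 0) (hw0 : w ≠ 0)
    (hlam : lam = z + z⁻¹) (hq : q = Complex.I * (z - z⁻¹))
    (hx : (x:ℂ) = w + w⁻¹) (hr : Complex.I * (r:ℂ) = w - w⁻¹)
    (hd : (x:ℂ) - lam ≠ 0) (hwz : 1 - w * z ≠ 0) :
    (4 - lam * x + q * r) / ((x:ℂ) - lam) = 2 * (w - z) / (1 - w * z) := by
  rw [div_eq_div_iff hd hwz]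
  have hrr : (r:ℂ) = -Complex.I * (w - w⁻¹) := by
    linear_combination (-Complex.I) * hr + (r:ℂ) * Complex.I_sq
  have hqr : q * (r:ℂ) = (z - z⁻¹) * (w - w⁻¹) := by
    rw [hq, hrr]
    linear_combination (-(z - z⁻¹) * (w - w⁻¹)) * Complex.I_sq
  rw [hqr, hlam, hx]
  field_simp
  ring

lemma aux_deriv_id (lam q X R : ℂ) (hr0 : R ≠ 0) (hd : X - lam ≠ 0)
    (hN : 4 - lam * X + q * R ≠ 0) (hr2 : R^2 = 4 - X^2) (hq2 : q^2 = 4 - lam^2) :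
    -X/R - lam * (1/R)
      - q * (((X-lam)/(4 - lam*X + q*R)) *
          (((-lam + q*(-X/R)) * (X-lam) - (4 - lam*X + q*R)) / (X-lam)^2))
      = R/(X-lam) := by
  obtain ⟨N, hNdef⟩ : ∃ N, N = 4 - lam*X + q*R := ⟨_, rfl⟩
  obtain ⟨d, hddef⟩ : ∃ d, d = X - lam := ⟨_, rfl⟩
  rw [← hNdef] at hN ⊢
  rw [← hddef] at hd ⊢
  field_simp
  have hBne : R * R * (N * (R * d ^ 2)) ≠ 0 :=
    mul_ne_zero (mul_ne_zero hr0 hr0)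
      (mul_ne_zero hN (mul_ne_zero hr0 (pow_ne_zero 2 hd)))
  rw [hNdef, hddef]
  linear_combination (-(4 - lam*X + q*R) + q^2) * hr2 + ((4 - lam*X + q*R) - q*R) * hq2
  /- old coefficients:
    ((-16)*lam^2 + (-4)*lam^2*R^2 + (-1)*lam^2*q*R^3 + (4)*lam^2*q^2 + lam^2*q^2*R^2 + (4)*lam^4
      + (32)*X*lam + (8)*X*lam*R^2 + (2)*X*lam*q*R^3 + (-8)*X*lam*q^2 + (-2)*X*lam*q^2*R^2
      + (-4)*X*lam^3 + X*lam^3*R^2 + (-1)*X*lam^3*q^2 + (-1)*X*lam^5 + (-16)*X^2 + (-4)*X^2*R^2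
      + (-1)*X^2*q*R^3 + (4)*X^2*q^2 + X^2*q^2*R^2 + (-4)*X^2*lam^2 + (-2)*X^2*lam^2*R^2
      + (2)*X^2*lam^2*q^2 + (2)*X^2*lam^4 + (4)*X^3*lam + X^3*lam*R^2 + (-1)*X^3*lam*q^2
      + (-1)*X^3*lam^3) * hr2
    + ((16)*lam^2 + (-32)*X*lam + (-4)*X*lam^3 + (16)*X^2 + (4)*X^2*lam^2 + (4)*X^3*lam
      + X^3*lam^3 + (-4)*X^4 + (-2)*X^4*lam^2 + X^5*lam) * hq2 -/

set_option maxHeartbeats 1000000 in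
/-- The Stieltjes transform of the semicircle-type measure
`dρ(x) = (2π)⁻¹ √(4-x²) dx` on `(-2,2)` equals `-z(λ)` for `Im λ > 0`, where
`z(λ)` is the root of `z² - λz + 1 = 0` with `|z| < 1`. -/
theorem stieltjes_transform_semicircle
    (lam : ℂ) (hlam : 0 < lam.im)
    (z : ℂ) (hroot : z ^ 2 - lam * z + 1 = 0) (hz : ‖z‖ < 1) :
    (1 / (2 * (Real.pi : ℂ))) *
        ∫ x in (-2 : ℝ)..2, (Real.sqrt (4 - x ^ 2) : ℂ) / ((x : ℂ) - lam)
      = -z := by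
  have hz0 : z ≠ 0 := by
    intro h; rw [h] at hroot; norm_num at hroot
  have hzz : z * z⁻¹ = 1 := mul_inv_cancel₀ hz0
  have hlz : lam = z + z⁻¹ := by
    field_simp
    linear_combination -hroot
  set q : ℂ := Complex.I * (z - z⁻¹) with hqdef
  have hq2 : q^2 = 4 - lam^2 := by
    rw [hqdef, hlz]
    linear_combination (z - z⁻¹)^2 * Complex.I_sq + 4 * hzz
  have hd : ∀ x : ℝ, (x:ℂ) - lam ≠ 0 := by
    intro x h
    have him : ((x:ℂ) - lam).im = 0 := by rw [h]; simp
    simp only [Complex.sub_im, Complex.ofReal_im, zero_sub, neg_eq_zero] at him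
    exact absurd him (ne_of_gt hlam)
  -- the function A whose log appears in the antiderivative
  set A : ℝ → ℂ := fun y =>
    (4 - lam * (y:ℂ) + q * ((Real.sqrt (4 - y^2) : ℝ) : ℂ)) / ((y:ℂ) - lam) with hAdef
  -- positivity of the imaginary part on the open interval
  have hAim : ∀ x ∈ Set.Ioo (-2:ℝ) 2, 0 < (A x).im := by
    intro x hx
    have hx2 : x^2 < 4 := by nlinarith [hx.1, hx.2]
    set r : ℝ := Real.sqrt (4 - x^2) with hrdef
    have hrpos : 0 < r := Real.sqrt_pos.mpr (by linarith)
    have hr2 : r^2 = 4 - x^2 := Real.sq_sqrt (by linarith)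
    set w : ℂ := ((x:ℂ) + Complex.I * (r:ℝ)) / 2 with hwdef
    have hwre : w.re = x / 2 := by simp [hwdef]
    have hwim : w.im = r / 2 := by simp [hwdef]
    have hnsq : Complex.normSq w = 1 := by
      rw [Complex.normSq_apply, hwre, hwim]
      nlinarith [hr2]
    have hwimpos : 0 < w.im := by rw [hwim]; positivity
    have hw0 : w ≠ 0 := by
      intro h; rw [h] at hwimpos; simp at hwimpos
    have hwinv : w⁻¹ = (starRingEnd ℂ) w := by
      rw [Complex.inv_def, hnsq]; simp
    have hxw : (x:ℂ) = w + w⁻¹ := by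
      rw [hwinv]
      apply Complex.ext <;> simp [hwre, hwim, Complex.add_re, Complex.add_im]
    have hrw : Complex.I * (r:ℂ) = w - w⁻¹ := by
      rw [hwinv]
      apply Complex.ext <;> simp [hwre, hwim]
    have hwz : 1 - w * z ≠ 0 := by
      intro h
      have h2 : w * z = 1 := (sub_eq_zero.mp h).symm
      have habsw : ‖w‖ = 1 := by rw [Complex.norm_def, hnsq, Real.sqrt_one]
      have h1 : ‖w * z‖ = 1 := by rw [h2, norm_one]
      rw [norm_mul, habsw, one_mul] at h1
      exact absurd h1 hz.ne
    have : A x = 2 * (w - z) / (1 - w * z) := by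
      rw [hAdef]
      exact aux_A_eq z lam q w x r hz0 hw0 hlz hqdef hxw hrw (hd x) hwz
    rw [this]
    exact aux_im_pos z w hz hnsq hwimpos
  have hAne : ∀ x ∈ Set.Ioo (-2:ℝ) 2, A x ≠ 0 := by
    intro x hx h
    have := hAim x hx
    rw [h] at this; simp at this
  -- antiderivative
  set F : ℝ → ℂ := fun y =>
    ((Real.sqrt (4 - y^2) : ℝ) : ℂ) - lam * ((Real.arcsin (y/2) : ℝ) : ℂ)
      - q * Complex.log (A y) with hFdef
  have hcont : Continuous (fun x:ℝ => ((Real.sqrt (4 - x^2) : ℝ) : ℂ) / ((x:ℂ) - lam)) := by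
    apply Continuous.div
    · exact Complex.continuous_ofReal.comp (Real.continuous_sqrt.comp (by continuity))
    · exact (Complex.continuous_ofReal).sub continuous_const
    · exact hd
  have hint : IntervalIntegrable (fun x:ℝ => ((Real.sqrt (4 - x^2) : ℝ) : ℂ) / ((x:ℂ) - lam))
      MeasureTheory.volume (-2) 2 := hcont.intervalIntegrable (-2) 2
  -- derivative of F on the interior
  have hderiv : ∀ x ∈ Set.Ioo (-2:ℝ) 2,
      HasDerivAt F (((Real.sqrt (4 - x^2) : ℝ) : ℂ) / ((x:ℂ) - lam)) x := by
    intro x hx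
    have hx2 : x^2 < 4 := by nlinarith [hx.1, hx.2]
    set r : ℝ := Real.sqrt (4 - x^2) with hrdef
    have hrpos : 0 < r := Real.sqrt_pos.mpr (by linarith)
    have hr2 : r^2 = 4 - x^2 := Real.sq_sqrt (by linarith)
    have h4ne : 4 - x^2 ≠ 0 := by linarith
    -- derivative of sqrt(4 - y^2)
    have hpoly : HasDerivAt (fun y:ℝ => 4 - y^2) (-(2*x)) x := by
      simpa using (hasDerivAt_pow 2 x).const_sub 4
    have hsq : HasDerivAt (fun y:ℝ => Real.sqrt (4 - y^2)) (-x/r) x := by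
      have h := (Real.hasDerivAt_sqrt h4ne).comp x hpoly
      refine h.congr_deriv ?_
      rw [← hrdef]
      field_simp
    have hsqC : HasDerivAt (fun y:ℝ => ((Real.sqrt (4 - y^2) : ℝ) : ℂ)) (((-x/r : ℝ)) : ℂ) x :=
      hsq.ofReal_comp
    -- derivative of arcsin(y/2)
    have hhalf : HasDerivAt (fun y:ℝ => y/2) (1/2) x := (hasDerivAt_id x).div_const 2
    have hne1 : x/2 ≠ -1 := by intro h; nlinarith [hx.1]
    have hne2 : x/2 ≠ 1 := by intro h; nlinarith [hx.2]
    have harc : HasDerivAt (fun y:ℝ => Real.arcsin (y/2)) (1/r) x := by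
      have h := (Real.hasDerivAt_arcsin hne1 hne2).comp x hhalf
      refine h.congr_deriv ?_
      have hs : Real.sqrt (1 - (x/2)^2) = r/2 := by
        rw [show 1 - (x/2)^2 = (r/2)^2 by nlinarith [hr2]]
        exact Real.sqrt_sq (by positivity)
      rw [hs]
      field_simp
    have harcC : HasDerivAt (fun y:ℝ => ((Real.arcsin (y/2) : ℝ) : ℂ)) (((1/r : ℝ)) : ℂ) x :=
      harc.ofReal_comp
    -- derivative of A
    have hyC : HasDerivAt (fun y:ℝ => ((y:ℝ) : ℂ)) 1 x := by
      simpa using (hasDerivAt_id x).ofReal_comp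
    have hnum : HasDerivAt (fun y:ℝ => 4 - lam * (y:ℂ) + q * ((Real.sqrt (4 - y^2) : ℝ) : ℂ))
        (-lam + q * (((-x/r : ℝ)) : ℂ)) x := by
      have h1 : HasDerivAt (fun y:ℝ => 4 - lam * (y:ℂ)) (-(lam * 1)) x :=
        (hyC.const_mul lam).const_sub 4
      have h2 := h1.add (hsqC.const_mul q)
      refine h2.congr_deriv ?_
      ring
    have hdenD : HasDerivAt (fun y:ℝ => (y:ℂ) - lam) 1 x := hyC.sub_const lam
    have hA' : HasDerivAt A
        (((-lam + q * (((-x/r : ℝ)) : ℂ)) * ((x:ℂ) - lam)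
            - (4 - lam * (x:ℂ) + q * ((r : ℝ) : ℂ)) * 1) / ((x:ℂ) - lam)^2) x := by
      rw [hAdef]
      exact hnum.div hdenD (hd x)
    have hslit : A x ∈ Complex.slitPlane := by
      rw [Complex.mem_slitPlane_iff]
      exact Or.inr (ne_of_gt (hAim x hx))
    have hlog : HasDerivAt (fun y:ℝ => Complex.log (A y)) ((A x)⁻¹ *
        (((-lam + q * (((-x/r : ℝ)) : ℂ)) * ((x:ℂ) - lam)
            - (4 - lam * (x:ℂ) + q * ((r : ℝ) : ℂ)) * 1) / ((x:ℂ) - lam)^2)) x := by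
      have h := (Complex.hasDerivAt_log hslit).comp x hA'
      exact h
    have hF := (hsqC.sub (harcC.const_mul lam)).sub (hlog.const_mul q)
    rw [hFdef]
    refine hF.congr_deriv ?_
    -- now the algebraic identity
    have hNne : 4 - lam * (x:ℂ) + q * ((r:ℝ) : ℂ) ≠ 0 := by
      intro h
      apply hAne x hx
      rw [hAdef]
      simp only [← hrdef]
      rw [h, zero_div]
    have hAinv : (A x)⁻¹ = ((x:ℂ) - lam) / (4 - lam * (x:ℂ) + q * ((r:ℝ) : ℂ)) := by
      rw [hAdef]
      simp only [← hrdef]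
      rw [inv_div]
    rw [hAinv]
    have hr0C : ((r:ℝ) : ℂ) ≠ 0 := by
      exact_mod_cast ne_of_gt hrpos
    have hr2C : ((r:ℝ) : ℂ)^2 = 4 - ((x:ℝ):ℂ)^2 := by
      exact_mod_cast congrArg (fun t : ℝ => (t : ℂ)) hr2
    have := aux_deriv_id lam q ((x:ℝ):ℂ) ((r:ℝ):ℂ) hr0C (hd x) hNne hr2C hq2
    rw [← this]
    push_cast
    ring
  -- limits at the endpoints
  have hA2 : A 2 = ((2:ℝ) : ℂ) := by
    rw [hAdef]
    simp only
    rw [show Real.sqrt (4 - (2:ℝ)^2) = 0 by norm_num]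
    push_cast
    rw [div_eq_iff (by exact_mod_cast hd 2)]
    ring
  have hAm2 : A (-2) = ((-2:ℝ) : ℂ) := by
    rw [hAdef]
    simp only
    rw [show Real.sqrt (4 - (-2:ℝ)^2) = 0 by norm_num]
    push_cast
    rw [div_eq_iff (by exact_mod_cast hd (-2))]
    ring
  have hAcont : ∀ x : ℝ, ContinuousAt A x := by
    intro x
    rw [hAdef]
    apply ContinuousAt.div
    · apply ContinuousAt.add
      · exact (continuousAt_const.sub (continuousAt_const.mul
          (Complex.continuous_ofReal.continuousAt)))
      · exact continuousAt_const.mul ((Complex.continuous_ofReal.comp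
          (Real.continuous_sqrt.comp (by continuity))).continuousAt)
    · exact (Complex.continuous_ofReal.continuousAt).sub continuousAt_const
    · exact hd x
  have hGcont : Continuous (fun y:ℝ =>
      ((Real.sqrt (4 - y^2) : ℝ) : ℂ) - lam * ((Real.arcsin (y/2) : ℝ) : ℂ)) := by
    apply Continuous.sub
    · exact Complex.continuous_ofReal.comp (Real.continuous_sqrt.comp (by continuity))
    · exact continuous_const.mul (Complex.continuous_ofReal.comp
        (Real.continuous_arcsin.comp (by continuity)))
  have htend2 : Tendsto F (𝓝[<] (2:ℝ)) (𝓝 (-(lam * ((Real.pi/2 : ℝ) : ℂ))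
      - q * ((Real.log 2 : ℝ) : ℂ))) := by
    have hlogcont : ContinuousAt (fun y:ℝ => Complex.log (A y)) 2 := by
      have h1 : ContinuousAt Complex.log (A 2) := by
        rw [hA2]
        apply continuousAt_clog
        rw [Complex.mem_slitPlane_iff]
        left; norm_num
      have := h1.comp (hAcont 2)
      exact this
    have hFc : ContinuousAt F 2 := by
      rw [hFdef]
      exact (hGcont.continuousAt.sub (continuousAt_const.mul hlogcont))
    have hF2 : F 2 = -(lam * ((Real.pi/2 : ℝ) : ℂ)) - q * ((Real.log 2 : ℝ) : ℂ) := by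
      rw [hFdef]
      simp only
      rw [show Real.sqrt (4 - (2:ℝ)^2) = 0 by norm_num,
        show (2:ℝ)/2 = 1 by norm_num, Real.arcsin_one, hA2,
        ← Complex.ofReal_log (by norm_num : (0:ℝ) ≤ 2)]
      push_cast
      ring
    rw [← hF2]
    exact hFc.continuousWithinAt.tendsto
  have htendm2 : Tendsto F (𝓝[>] (-2:ℝ)) (𝓝 ((lam * ((Real.pi/2 : ℝ) : ℂ))
      - q * ((Real.log 2 : ℝ) + Real.pi * Complex.I))) := by
    have hAtend : Tendsto A (𝓝[>] (-2:ℝ)) (𝓝[{w : ℂ | 0 ≤ w.im}] ((-2:ℝ) : ℂ)) := by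
      rw [tendsto_nhdsWithin_iff]
      constructor
      · have := (hAcont (-2)).tendsto
        rw [hAm2] at this
        exact this.mono_left nhdsWithin_le_nhds
      · filter_upwards [Ioo_mem_nhdsGT_of_mem
          (show (-2:ℝ) ∈ Set.Ico (-2:ℝ) 2 from Set.mem_Ico.mpr ⟨le_refl _, by norm_num⟩)] with y hy
        exact (hAim y hy).le
    have hlogt : Tendsto (fun y:ℝ => Complex.log (A y)) (𝓝[>] (-2:ℝ))
        (𝓝 ((Real.log 2 : ℝ) + Real.pi * Complex.I)) := by
      have h := (Complex.tendsto_log_nhdsWithin_im_nonneg_of_re_neg_of_im_zero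
        (by norm_num : (((-2:ℝ):ℂ)).re < 0) (by norm_num : (((-2:ℝ):ℂ)).im = 0)).comp hAtend
      have habs : ‖(((-2:ℝ):ℂ))‖ = 2 := by
        rw [Complex.norm_real]; norm_num
      rw [habs] at h
      exact h
    have hGtend : Tendsto (fun y:ℝ =>
        ((Real.sqrt (4 - y^2) : ℝ) : ℂ) - lam * ((Real.arcsin (y/2) : ℝ) : ℂ))
        (𝓝[>] (-2:ℝ)) (𝓝 (lam * ((Real.pi/2 : ℝ) : ℂ))) := by
      have := hGcont.continuousAt (x := (-2:ℝ)).tendsto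
      have hval : ((Real.sqrt (4 - (-2:ℝ)^2) : ℝ) : ℂ)
          - lam * ((Real.arcsin ((-2:ℝ)/2) : ℝ) : ℂ) = lam * ((Real.pi/2 : ℝ) : ℂ) := by
        rw [show Real.sqrt (4 - (-2:ℝ)^2) = 0 by norm_num,
          show (-2:ℝ)/2 = -1 by norm_num, Real.arcsin_neg, Real.arcsin_one]
        push_cast
        ring
      rw [hval] at this
      exact this.mono_left nhdsWithin_le_nhds
    have := hGtend.sub (hlogt.const_mul q)
    rw [hFdef]
    exact this
  -- apply FTC
  have hmain := intervalIntegral.integral_eq_sub_of_hasDerivAt_of_tendsto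
    (by norm_num : (-2:ℝ) < 2) hderiv hint htendm2 htend2
  have hcast : (∫ x in (-2:ℝ)..2, (Real.sqrt (4 - x ^ 2) : ℂ) / ((x : ℂ) - lam))
      = ∫ x in (-2:ℝ)..2, ((Real.sqrt (4 - x^2) : ℝ) : ℂ) / ((x:ℂ) - lam) := by
    norm_num
  rw [hcast, hmain]
  have hpi : (Real.pi : ℂ) ≠ 0 := by
    exact_mod_cast Real.pi_ne_zero
  have hdiff : (-(lam * ((Real.pi/2 : ℝ) : ℂ)) - q * ((Real.log 2 : ℝ) : ℂ))
      - ((lam * ((Real.pi/2 : ℝ) : ℂ)) - q * ((Real.log 2 : ℝ) + Real.pi * Complex.I))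
      = -2 * (Real.pi:ℂ) * z := by
    rw [hqdef, hlz]
    push_cast
    linear_combination ((Real.pi:ℂ) * (z - z⁻¹)) * Complex.I_sq
  rw [hdiff]
  field_simp
end

section
/- Let B ≥ 1 and let a, b : ℕ → ℝ satisfy a 0 = 1, a n > 0 and max(a n, |b n|) ≤ B for all n ≥ 1. Then for every λ ∈ ℂ with Im λ > 0, the finite Weyl functions converge to the Weyl function of the semi-infinite Jacobi operator: m^N(λ) → m(λ) as N → ∞. -/
open Filter

lemma eucl_coord_le {n : ℕ} (v : EuclideanSpace ℂ (Fin n)) (i : Fin n) : ‖v i‖ ≤ ‖v‖ := by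
  rw [EuclideanSpace.norm_eq]
  have h1 : ‖v i‖ = Real.sqrt (‖v i‖ ^ 2) := by
    rw [Real.sqrt_sq (norm_nonneg _)]
  rw [h1]
  apply Real.sqrt_le_sqrt
  exact Finset.single_le_sum (f := fun j => ‖v j‖ ^ 2) (fun j _ => by positivity) (Finset.mem_univ i)

lemma coercive {n : ℕ} (A : Matrix (Fin n) (Fin n) ℂ) (hA : A.IsHermitian) (lam : ℂ)
    (x y : EuclideanSpace ℂ (Fin n)) (hxy : y = Matrix.toEuclideanLin (A - lam • 1) x) :
    lam.im * ‖x‖ ≤ ‖y‖ := by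
  have hsym := (Matrix.isHermitian_iff_isSymmetric (A := A)).mp hA
  set L := Matrix.toEuclideanLin A with hL
  have hy : y = L x - lam • x := by
    rw [hxy, map_sub, map_smul]
    congr 1
    simp only [LinearMap.sub_apply, LinearMap.smul_apply]
    congr 1
    have : Matrix.toEuclideanLin (1 : Matrix (Fin n) (Fin n) ℂ) x
        = (WithLp.equiv 2 (Fin n → ℂ)).symm ((1 : Matrix (Fin n) (Fin n) ℂ).mulVec (WithLp.equiv 2 (Fin n → ℂ) x)) :=
      Matrix.toEuclideanLin_apply _ _
    rw [this, Matrix.one_mulVec]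
    rfl
  have him : (inner ℂ x y : ℂ).im = -(lam.im * ‖x‖ ^ 2) := by
    rw [hy, inner_sub_right, inner_smul_right]
    have hreal : (inner ℂ x (L x) : ℂ).im = 0 := by
      have h2 : (starRingEnd ℂ) (inner ℂ x (L x) : ℂ) = (inner ℂ x (L x) : ℂ) := by
        rw [inner_conj_symm]
        exact (hsym x x)
      exact Complex.conj_eq_iff_im.mp h2
    have hself : (inner ℂ x x : ℂ) = (‖x‖ : ℂ) ^ 2 := by
      rw [inner_self_eq_norm_sq_to_K]; norm_cast
    have hc : ((‖x‖ : ℂ)) ^ 2 = ((‖x‖ ^ 2 : ℝ) : ℂ) := by push_cast; ring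
    rw [hself, hc, Complex.sub_im, hreal, Complex.mul_im, Complex.ofReal_im,
      Complex.ofReal_re]
    ring
  have h3 : lam.im * ‖x‖ ^ 2 ≤ ‖x‖ * ‖y‖ := by
    calc lam.im * ‖x‖ ^ 2 ≤ |(inner ℂ x y : ℂ).im| := by
          rw [him, abs_neg]; exact le_abs_self _
      _ ≤ ‖(inner ℂ x y : ℂ)‖ := Complex.abs_im_le_norm _
      _ ≤ ‖x‖ * ‖y‖ := by
          exact norm_inner_le_norm x y
  rcases eq_or_lt_of_le (norm_nonneg x) with h | h
  · rw [← h, mul_zero]; exact norm_nonneg y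
  · have := (mul_le_mul_iff_of_pos_right h).mpr (le_refl (1:ℝ))
    nlinarith [h3, h]

lemma fin_sum_ite {n : ℕ} (m : ℕ) (f : Fin n → ℂ) :
    ∑ j : Fin n, (if m = (j : ℕ) then f j else 0) = if h : m < n then f ⟨m, h⟩ else 0 := by
  split_ifs with h
  · rw [Finset.sum_eq_single (⟨m, h⟩ : Fin n)]
    · simp
    · intro j _ hj
      rw [if_neg]
      intro he
      exact hj (Fin.ext he.symm)
    · intro hnm; exact absurd (Finset.mem_univ _) hnm
  · apply Finset.sum_eq_zero
    intro j _
    rw [if_neg]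
    intro he
    have := j.isLt
    omega

/-- The `N×N` Jacobi matrix with diagonal `b_1,…,b_N` and off-diagonal
`a_1,…,a_{N-1}`, viewed as a complex matrix. -/
def jacobiMatrix (N : ℕ) (a b : ℕ → ℝ) : Matrix (Fin N) (Fin N) ℂ :=
  Matrix.of fun i j =>
    if (i : ℕ) = (j : ℕ) then (b (i + 1) : ℂ)
    else if (i : ℕ) + 1 = (j : ℕ) then (a ((i : ℕ) + 1) : ℂ)
    else if (j : ℕ) + 1 = (i : ℕ) then (a ((j : ℕ) + 1) : ℂ)
    else 0

/-- `H` acts as the semi-infinite Jacobi matrix on `ℓ²(ℕ, ℂ)` (here the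
coordinate `n : ℕ` corresponds to the matrix index `n + 1 ≥ 1`):
`(Hψ)₁ = b₁ψ₁ + a₁ψ₂` and `(Hψ)ₙ = a_{n-1}ψ_{n-1} + b_nψ_n + a_nψ_{n+1}` for
`n ≥ 2`. -/
def IsJacobiOp (a b : ℕ → ℝ)
    (H : lp (fun _ : ℕ => ℂ) 2 →L[ℂ] lp (fun _ : ℕ => ℂ) 2) : Prop :=
  ∀ ψ : lp (fun _ : ℕ => ℂ) 2,
    (H ψ) 0 = (b 1 : ℂ) * ψ 0 + (a 1 : ℂ) * ψ 1 ∧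
    ∀ n : ℕ, 1 ≤ n →
      (H ψ) n = (a n : ℂ) * ψ (n - 1) + (b (n + 1) : ℂ) * ψ n
        + (a (n + 1) : ℂ) * ψ (n + 1)

lemma jacobi_herm (N : ℕ) (a b : ℕ → ℝ) : (jacobiMatrix N a b).IsHermitian := by
  rw [Matrix.IsHermitian]
  ext i j
  simp only [Matrix.conjTranspose_apply, jacobiMatrix, Matrix.of_apply]
  split_ifs <;> first
    | (exfalso; omega)
    | (simp [Complex.conj_ofReal]; done)
    | (simp only [RCLike.star_def, Complex.conj_ofReal]; norm_cast; congr 1; omega)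

lemma jacobi_row (N : ℕ) (a b : ℕ → ℝ) (lam : ℂ) (ψ : ℕ → ℂ) (i : Fin (N + 1)) :
    ((jacobiMatrix (N + 1) a b - lam • 1).mulVec (fun j => ψ (j : ℕ))) i =
      (if 1 ≤ (i : ℕ) then (a (i : ℕ) : ℂ) * ψ ((i : ℕ) - 1) else 0)
      + ((b ((i : ℕ) + 1) : ℂ) - lam) * ψ (i : ℕ)
      + (if (i : ℕ) < N then (a ((i : ℕ) + 1) : ℂ) * ψ ((i : ℕ) + 1) else 0) := by
  have hsplit : ∀ j : Fin (N + 1),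
      (jacobiMatrix (N + 1) a b - lam • 1) i j * ψ (j : ℕ) =
        (if (i : ℕ) = (j : ℕ) then ((b ((i : ℕ) + 1) : ℂ) - lam) * ψ (j : ℕ) else 0)
        + (if (i : ℕ) + 1 = (j : ℕ) then (a ((i : ℕ) + 1) : ℂ) * ψ (j : ℕ) else 0)
        + (if (j : ℕ) + 1 = (i : ℕ) then (a ((j : ℕ) + 1) : ℂ) * ψ (j : ℕ) else 0) := by
    intro j
    have hone : (1 : Matrix (Fin (N + 1)) (Fin (N + 1)) ℂ) i j = if (i : ℕ) = (j : ℕ) then 1 else 0 := by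
      rw [Matrix.one_apply]
      simp [Fin.ext_iff]
    simp only [Matrix.sub_apply, Matrix.smul_apply, hone, jacobiMatrix, Matrix.of_apply,
      smul_eq_mul]
    split_ifs <;> first | ring1 | (exfalso; omega)
  have hS1 : ∑ j : Fin (N + 1), (if (i : ℕ) = (j : ℕ) then ((b ((i : ℕ) + 1) : ℂ) - lam) * ψ (j : ℕ) else 0)
      = ((b ((i : ℕ) + 1) : ℂ) - lam) * ψ (i : ℕ) := by
    rw [fin_sum_ite (i : ℕ) (fun j : Fin (N + 1) => ((b ((i : ℕ) + 1) : ℂ) - lam) * ψ (j : ℕ)),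
      dif_pos i.isLt]
  have hS2 : ∑ j : Fin (N + 1), (if (i : ℕ) + 1 = (j : ℕ) then (a ((i : ℕ) + 1) : ℂ) * ψ (j : ℕ) else 0)
      = (if (i : ℕ) < N then (a ((i : ℕ) + 1) : ℂ) * ψ ((i : ℕ) + 1) else 0) := by
    rw [fin_sum_ite ((i : ℕ) + 1) (fun j : Fin (N + 1) => (a ((i : ℕ) + 1) : ℂ) * ψ (j : ℕ))]
    by_cases hi : (i : ℕ) < N
    · rw [dif_pos (by omega : (i : ℕ) + 1 < N + 1), if_pos hi]
    · rw [dif_neg (by omega), if_neg hi]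
  have hS3 : ∑ j : Fin (N + 1), (if (j : ℕ) + 1 = (i : ℕ) then (a ((j : ℕ) + 1) : ℂ) * ψ (j : ℕ) else 0)
      = (if 1 ≤ (i : ℕ) then (a (i : ℕ) : ℂ) * ψ ((i : ℕ) - 1) else 0) := by
    by_cases hi : 1 ≤ (i : ℕ)
    · have hcong : ∀ j : Fin (N + 1),
          (if (j : ℕ) + 1 = (i : ℕ) then (a ((j : ℕ) + 1) : ℂ) * ψ (j : ℕ) else 0)
          = (if (i : ℕ) - 1 = (j : ℕ) then (a ((j : ℕ) + 1) : ℂ) * ψ (j : ℕ) else 0) := by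
        intro j
        exact if_congr (by omega) rfl rfl
      simp only [hcong]
      rw [fin_sum_ite ((i : ℕ) - 1) (fun j : Fin (N + 1) => (a ((j : ℕ) + 1) : ℂ) * ψ (j : ℕ)),
        dif_pos (by omega : (i : ℕ) - 1 < N + 1), if_pos hi]
      have h2 : (i : ℕ) - 1 + 1 = (i : ℕ) := by omega
      simp [h2]
    · rw [if_neg hi]
      apply Finset.sum_eq_zero
      intro j _
      rw [if_neg (by omega)]
  rw [Matrix.mulVec, dotProduct]
  simp only [hsplit]
  rw [Finset.sum_add_distrib, Finset.sum_add_distrib, hS1, hS2, hS3]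
  ring

lemma det_ne_zero {n : ℕ} (A : Matrix (Fin n) (Fin n) ℂ) (hA : A.IsHermitian) (lam : ℂ)
    (hlam : 0 < lam.im) : (A - lam • 1).det ≠ 0 := by
  intro hdet
  obtain ⟨v, hv, hmul⟩ := (Matrix.exists_mulVec_eq_zero_iff).mpr hdet
  set x : EuclideanSpace ℂ (Fin n) := (WithLp.equiv 2 (Fin n → ℂ)).symm v with hx
  have hy : (0 : EuclideanSpace ℂ (Fin n)) = Matrix.toEuclideanLin (A - lam • 1) x := by
    rw [hx]; show _ = WithLp.toLp 2 ((A - lam • 1).mulVec v); rw [hmul]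
    rfl
  have h := coercive A hA lam x 0 hy
  rw [norm_zero] at h
  have hxnorm : ‖x‖ = 0 := le_antisymm (by nlinarith [norm_nonneg x]) (norm_nonneg x)
  have : x = 0 := norm_eq_zero.mp hxnorm
  apply hv
  funext i
  exact congrFun (congrArg (fun (z : EuclideanSpace ℂ (Fin n)) => (WithLp.equiv 2 (Fin n → ℂ)) z) this) i

lemma inv_bound {n : ℕ} (A : Matrix (Fin n) (Fin n) ℂ) (hA : A.IsHermitian) (lam : ℂ)
    (hlam : 0 < lam.im) (i j : Fin n) :
    ‖(A - lam • 1)⁻¹ i j‖ ≤ 1 / lam.im := by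
  set K := A - lam • 1 with hK
  have hdet := det_ne_zero A hA lam hlam
  have hunit : IsUnit K.det := isUnit_iff_ne_zero.mpr hdet
  set u : Fin n → ℂ := K⁻¹.mulVec (Pi.single j 1) with hu
  have hKu : K.mulVec u = Pi.single j 1 := by
    rw [hu, Matrix.mulVec_mulVec, Matrix.mul_nonsing_inv _ hunit, Matrix.one_mulVec]
  set x : EuclideanSpace ℂ (Fin n) := (WithLp.equiv 2 (Fin n → ℂ)).symm u with hx
  have hy : EuclideanSpace.single j (1 : ℂ) = Matrix.toEuclideanLin K x := by
    rw [hx]; show _ = WithLp.toLp 2 (K.mulVec u); rw [hKu]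
    rfl
  have h := coercive A hA lam x _ hy
  rw [EuclideanSpace.norm_single] at h
  have hxb : ‖x‖ ≤ 1 / lam.im := by
    rw [le_div_iff₀ hlam]
    calc ‖x‖ * lam.im = lam.im * ‖x‖ := by ring
      _ ≤ ‖(1 : ℂ)‖ := h
      _ = 1 := by simp
  have hco : ‖x i‖ ≤ ‖x‖ := eucl_coord_le x i
  have hxi : x i = K⁻¹ i j := by
    show u i = K⁻¹ i j
    rw [hu, Matrix.mulVec_single_one]; rfl
  rw [hxi] at hco
  exact hco.trans hxb

/-- For `Im λ > 0` the finite Weyl functions `m^N(λ) = ((H^N - λ)⁻¹e₁, e₁)`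
converge, as `N → ∞`, to the Weyl function `m(λ) = ⟨(H-λ)⁻¹e₁, e₁⟩` of the
semi-infinite Jacobi operator (here `T = (H-λ)⁻¹` is any bounded two-sided
inverse of `H - λ`). -/
theorem finite_weyl_functions_tendsto
    (B : ℝ) (hB : 1 ≤ B) (a b : ℕ → ℝ) (ha0 : a 0 = 1)
    (hapos : ∀ n, 1 ≤ n → 0 < a n)
    (hbound : ∀ n, 1 ≤ n → max (a n) |b n| ≤ B)
    (H : lp (fun _ : ℕ => ℂ) 2 →L[ℂ] lp (fun _ : ℕ => ℂ) 2)
    (hH : IsJacobiOp a b H)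
    (lam : ℂ) (hlam : 0 < lam.im)
    (T : lp (fun _ : ℕ => ℂ) 2 →L[ℂ] lp (fun _ : ℕ => ℂ) 2)
    (hT1 : ∀ ψ, H (T ψ) - lam • T ψ = ψ)
    (hT2 : ∀ ψ, T (H ψ - lam • ψ) = ψ) :
    Tendsto (fun N : ℕ => (jacobiMatrix (N + 1) a b - lam • 1)⁻¹ 0 0) atTop
      (nhds (inner (𝕜 := ℂ) (lp.single 2 (0 : ℕ) (1 : ℂ))
        (T (lp.single 2 (0 : ℕ) (1 : ℂ))))) := by
  classical
  set e1 : lp (fun _ : ℕ => ℂ) 2 := lp.single 2 (0 : ℕ) (1 : ℂ) with he1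
  set ψ : ℕ → ℂ := fun n => (T e1) n with hψ
  -- coordinates of the resolvent identity
  have hco : ∀ n : ℕ, (H (T e1)) n - lam * ψ n = e1 n := by
    intro n
    have h := hT1 e1
    have h2 := congrFun (congrArg (fun (f : lp (fun _ : ℕ => ℂ) 2) => (f : ∀ _ : ℕ, ℂ)) h) n
    simp only [lp.coeFn_sub, lp.coeFn_smul] at h2; exact h2
  have h0 : (b 1 : ℂ) * ψ 0 + (a 1 : ℂ) * ψ 1 - lam * ψ 0 = 1 := by
    have h := hco 0
    rw [(hH (T e1)).1] at h
    have he : e1 0 = 1 := lp.single_apply_self 2 0 1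
    rw [he] at h
    exact h
  have hn : ∀ n : ℕ, 1 ≤ n →
      (a n : ℂ) * ψ (n - 1) + (b (n + 1) : ℂ) * ψ n + (a (n + 1) : ℂ) * ψ (n + 1)
        - lam * ψ n = 0 := by
    intro n hn1
    have h := hco n
    rw [(hH (T e1)).2 n hn1] at h
    have he : e1 n = 0 := lp.single_apply_ne 2 0 1 (by omega)
    rw [he] at h
    exact h
  -- the row identity
  have hrow : ∀ N : ℕ, (jacobiMatrix (N + 1) a b - lam • 1).mulVec
        (fun j : Fin (N + 1) => ψ (j : ℕ))
      = ((Pi.single (0 : Fin (N + 1)) (1 : ℂ) : Fin (N + 1) → ℂ)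
          - ((a (N + 1) : ℂ) * ψ (N + 1)) •
            (Pi.single (Fin.last N) (1 : ℂ) : Fin (N + 1) → ℂ)) := by
    intro N
    funext i
    rw [jacobi_row]
    simp only [Pi.sub_apply, Pi.smul_apply, smul_eq_mul, Pi.single_apply]
    by_cases hi0 : (i : ℕ) = 0 <;> by_cases hiN : (i : ℕ) = N
    · have hN : N = 0 := by omega
      subst hN
      rw [if_neg (by omega), if_neg (by omega),
        if_pos (show i = 0 from Fin.ext (by simpa using hi0)),
        if_pos (show i = Fin.last 0 from Fin.ext (by simp only [Fin.val_last]; omega))]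
      simp only [hi0]
      linear_combination h0
    · rw [if_neg (by omega), if_pos (by omega),
        if_pos (show i = 0 from Fin.ext (by simpa using hi0)),
        if_neg (show ¬ i = Fin.last N from by rw [Fin.ext_iff]; simp [Fin.last]; omega)]
      simp only [hi0]
      linear_combination h0
    · rw [if_pos (by omega), if_neg (by omega),
        if_neg (show ¬ i = 0 from by rw [Fin.ext_iff]; simpa using hi0),
        if_pos (show i = Fin.last N from by rw [Fin.ext_iff]; simp [Fin.last]; omega)]
      simp only [hiN]
      linear_combination hn N (by omega)
    · have hilt : (i : ℕ) < N := by have := i.isLt; omega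
      rw [if_pos (by omega), if_pos hilt,
        if_neg (show ¬ i = 0 from by rw [Fin.ext_iff]; simpa using hi0),
        if_neg (show ¬ i = Fin.last N from by rw [Fin.ext_iff]; simp [Fin.last]; omega)]
      linear_combination hn (i : ℕ) (by omega)
  have hunit : ∀ N : ℕ, IsUnit (jacobiMatrix (N + 1) a b - lam • 1).det := fun N =>
    isUnit_iff_ne_zero.mpr (det_ne_zero _ (jacobi_herm (N + 1) a b) lam hlam)
  -- the key identity
  have hkey : ∀ N : ℕ, (jacobiMatrix (N + 1) a b - lam • 1)⁻¹ 0 0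
      = ψ 0 + ((a (N + 1) : ℂ) * ψ (N + 1))
          * (jacobiMatrix (N + 1) a b - lam • 1)⁻¹ 0 (Fin.last N) := by
    intro N
    set K := jacobiMatrix (N + 1) a b - lam • 1 with hK
    have h1 : (fun j : Fin (N + 1) => ψ (j : ℕ))
        = K⁻¹.mulVec (K.mulVec (fun j : Fin (N + 1) => ψ (j : ℕ))) := by
      rw [Matrix.mulVec_mulVec, Matrix.nonsing_inv_mul _ (hunit N), Matrix.one_mulVec]
    rw [hrow N, Matrix.mulVec_sub, Matrix.mulVec_smul, Matrix.mulVec_single,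
      Matrix.mulVec_single] at h1
    have h2 := congrFun h1 0
    simp only [Pi.sub_apply, Pi.smul_apply, smul_eq_mul, op_smul_eq_mul, Matrix.col_apply, mul_one, Fin.val_zero] at h2
    linear_combination (-1 : ℂ) * h2
  -- decay of ψ
  have hmem : Memℓp ψ 2 := lp.memℓp (T e1)
  have hsq : Summable (fun n => ‖ψ n‖ ^ (2 : ENNReal).toReal) :=
    hmem.summable (by norm_num)
  have ht1 : Tendsto (fun n => ‖ψ n‖ ^ (2 : ENNReal).toReal) atTop (nhds 0) :=
    hsq.tendsto_atTop_zero
  have ht2 : Tendsto (fun n => ‖ψ n‖) atTop (nhds 0) := by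
    have h := ht1.sqrt
    rw [Real.sqrt_zero] at h
    refine h.congr fun n => ?_
    rw [ENNReal.toReal_ofNat, show (2 : ℝ) = ((2 : ℕ) : ℝ) by norm_num,
      Real.rpow_natCast, Real.sqrt_sq (norm_nonneg _)]
  -- the error term tends to zero
  have hcb : ∀ N : ℕ, ‖((a (N + 1) : ℂ) * ψ (N + 1))
        * (jacobiMatrix (N + 1) a b - lam • 1)⁻¹ 0 (Fin.last N)‖
      ≤ (B / lam.im) * ‖ψ (N + 1)‖ := by
    intro N
    rw [norm_mul, norm_mul]
    have hA : ‖((a (N + 1) : ℝ) : ℂ)‖ ≤ B := by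
      rw [Complex.norm_real, Real.norm_eq_abs,
        abs_of_pos (hapos (N + 1) (by omega))]
      exact (le_max_left _ _).trans (hbound (N + 1) (by omega))
    have hI : ‖(jacobiMatrix (N + 1) a b - lam • 1)⁻¹ 0 (Fin.last N)‖ ≤ 1 / lam.im :=
      inv_bound _ (jacobi_herm (N + 1) a b) lam hlam 0 (Fin.last N)
    calc ‖((a (N + 1) : ℝ) : ℂ)‖ * ‖ψ (N + 1)‖
          * ‖(jacobiMatrix (N + 1) a b - lam • 1)⁻¹ 0 (Fin.last N)‖
        ≤ B * ‖ψ (N + 1)‖ * (1 / lam.im) := by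
          gcongr
      _ = (B / lam.im) * ‖ψ (N + 1)‖ := by ring
  have hgz : Tendsto (fun N : ℕ => (B / lam.im) * ‖ψ (N + 1)‖) atTop (nhds 0) := by
    have := ((ht2.comp (tendsto_add_atTop_nat 1)).const_mul (B / lam.im))
    simpa using this
  have hcz : Tendsto (fun N : ℕ => ((a (N + 1) : ℂ) * ψ (N + 1))
      * (jacobiMatrix (N + 1) a b - lam • 1)⁻¹ 0 (Fin.last N)) atTop (nhds 0) :=
    squeeze_zero_norm hcb hgz
  have hinner : (inner (𝕜 := ℂ) e1 (T e1) : ℂ) = ψ 0 := by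
    rw [he1, lp.inner_single_left]
    simp
    rfl
  rw [show (inner (𝕜 := ℂ) (lp.single 2 (0 : ℕ) (1 : ℂ)) (T (lp.single 2 (0 : ℕ) (1 : ℂ))) : ℂ)
      = ψ 0 from hinner]
  have hT : Tendsto (fun N : ℕ => ψ 0 + ((a (N + 1) : ℂ) * ψ (N + 1))
      * (jacobiMatrix (N + 1) a b - lam • 1)⁻¹ 0 (Fin.last N)) atTop (nhds (ψ 0)) := by
    simpa using tendsto_const_nhds.add hcz
  exact hT.congr fun N => (hkey N).symm
end
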